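/- arXiv:1108.4007 — 3 statements merged into one kernel-verified Lean document; each statement's English description precedes it below -/
import Mathlib

section
/- Let X be a zero-dimensional subscheme of P^1 × P^1 with Hilbert function M_X = (m_{ij}) and first difference ΔM_X = (c_{ij}) where c_{ij} = m_{ij} - m_{i-1,j} - m_{i,j-1} + m_{i-1,j-1}. Then c_{ij} ≤ 1 for all (i,j), and c_{ij} = 0 for i ≫ 0 or j ≫ 0. -/
/- Common setup: the bigraded coordinate ring of Q = P^1 x P^1, bigraded Hilbert
functions, point ideals, separators, minimal free resolutions, staircase (Ferrers)
configurations of reduced ACM schemes. -/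

open MvPolynomial

attribute [local instance] Classical.propDecidable

noncomputable section

/-- Variables of the bihomogeneous coordinate ring: `inl` = x₀,x₁ and `inr` = y₀,y₁. -/
abbrev BiVar := Fin 2 ⊕ Fin 2

/-- The bigraded coordinate ring S = k[x₀,x₁;y₀,y₁] of Q = P¹ × P¹. -/
abbrev S2 (k : Type) [Field k] := MvPolynomial BiVar k

/-- The bigrading weights: x-variables have degree (1,0), y-variables degree (0,1). -/
def bw : BiVar → ℕ × ℕ := Sum.elim (fun _ => (1, 0)) (fun _ => (0, 1))

/-- P¹ over k. -/
abbrev P1 (k : Type) [Field k] := Projectivization k (Fin 2 → k)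

/-- A point of Q = P¹ × P¹. -/
abbrev PtQ (k : Type) [Field k] := P1 k × P1 k

variable {k : Type} [Field k]

/-- Evaluation of a polynomial at (a representative of) a point of Q. -/
def evalPt (x : PtQ k) : S2 k →+* k :=
  MvPolynomial.eval (Sum.elim x.1.rep x.2.rep)

/-- An ideal is bihomogeneous if it contains all bihomogeneous components of its members. -/
def IsBihom (I : Ideal (S2 k)) : Prop :=
  ∀ f ∈ I, ∀ d : ℕ × ℕ, weightedHomogeneousComponent bw d f ∈ I

/-- Saturation with respect to the irrelevant ideal (x₀,x₁) ∩ (y₀,y₁). -/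
def IsSat (I : Ideal (S2 k)) : Prop :=
  ∀ f : S2 k, (∀ i j : Fin 2, X (Sum.inl i) * X (Sum.inr j) * f ∈ I) → f ∈ I

/-- The zero locus in Q of a (bihomogeneous) ideal. -/
def biZeroLocus (I : Ideal (S2 k)) : Set (PtQ k) :=
  {x | ∀ f ∈ I, ∀ d : ℕ × ℕ, evalPt x (weightedHomogeneousComponent bw d f) = 0}

/-- The (saturated) ideal of a point of Q: generated by the bihomogeneous forms vanishing there. -/
def pointIdeal (x : PtQ k) : Ideal (S2 k) :=
  Ideal.span {f | (∃ d : ℕ × ℕ, IsWeightedHomogeneous bw f d) ∧ evalPt x f = 0}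

/-- The saturated ideal of a reduced finite set of points of Q. -/
def idealOfFinset (Z : Finset (PtQ k)) : Ideal (S2 k) :=
  ⨅ x ∈ Z, pointIdeal x

/-- The bigraded piece of degree d of an ideal, as a k-subspace. -/
def Ipiece (I : Ideal (S2 k)) (d : ℕ × ℕ) : Submodule k (S2 k) :=
  (Submodule.restrictScalars k I) ⊓ weightedHomogeneousSubmodule k bw d

/-- The bigraded Hilbert function M_X(i,j) = dim S_{i,j} - dim (I_X)_{i,j}. -/
def hilb (I : Ideal (S2 k)) (i j : ℕ) : ℕ :=
  Module.finrank k (weightedHomogeneousSubmodule k bw ((i, j) : ℕ × ℕ)) -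
    Module.finrank k (Ipiece I (i, j))

/-- The Hilbert function extended by 0 to negative arguments. -/
def HM (I : Ideal (S2 k)) (i j : ℤ) : ℤ :=
  if 0 ≤ i ∧ 0 ≤ j then (hilb I i.toNat j.toNat : ℤ) else 0

/-- The first difference ΔM_X of the Hilbert function. -/
def ΔH (I : Ideal (S2 k)) (i j : ℤ) : ℤ :=
  HM I i j - HM I (i - 1) j - HM I i (j - 1) + HM I (i - 1) (j - 1)

/-- Index of a nonzero coordinate of a nonzero vector in k². -/
def pivot (v : Fin 2 → k) : Fin 2 := if v 0 ≠ 0 then 0 else 1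

/-- The other index. -/
def off : Fin 2 → Fin 2 := fun s => if s = 0 then 1 else 0

/-- Dehomogenization onto the affine chart around a point of Q. -/
def chartHom (x : PtQ k) : S2 k →+* MvPolynomial (Fin 2) k :=
  (aeval (R := k) (Sum.elim
    (fun i : Fin 2 => if i = pivot x.1.rep then 1 else X 0)
    (fun j : Fin 2 => if j = pivot x.2.rep then 1 else X 1))).toRingHom

/-- The affine coordinates of a point of Q in its chart. -/
def affPt (x : PtQ k) : Fin 2 → k := fun u =>
  if u = 0 then x.1.rep (off (pivot x.1.rep)) / x.1.rep (pivot x.1.rep)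
  else x.2.rep (off (pivot x.2.rep)) / x.2.rep (pivot x.2.rep)

/-- The multiplicity m_X(P): the length of the local ring O_{X,P}, computed in the
affine chart as the stable value of dim A/(I_aff + m_P^n). -/
def mult (I : Ideal (S2 k)) (x : PtQ k) : ℕ :=
  ⨆ n : ℕ, Module.finrank k
    (MvPolynomial (Fin 2) k ⧸
      (Ideal.map (chartHom x) I ⊔ (RingHom.ker (MvPolynomial.eval (affPt x))) ^ n))

/-- X is arithmetically Cohen–Macaulay: depth S(X) = 2, i.e. there is a regular
sequence of length two on S/I_X inside the maximal ideal of S. -/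
def IsACM (I : Ideal (S2 k)) : Prop :=
  ∃ f g : S2 k, constantCoeff f = 0 ∧ constantCoeff g = 0 ∧
    (∀ h : S2 k, f * h ∈ I → h ∈ I) ∧
    (∀ h : S2 k, g * h ∈ I ⊔ Ideal.span {f} → h ∈ I ⊔ Ideal.span {f})

/-- f is a separator of degree d for the point x relative to the residual scheme Z:
f is bihomogeneous of degree d, vanishes on Z, and is nonzero at x. -/
def IsSeparator (IZ : Ideal (S2 k)) (x : PtQ k) (f : S2 k) (d : ℕ × ℕ) : Prop :=
  IsWeightedHomogeneous bw f d ∧ f ∈ IZ ∧ evalPt x f ≠ 0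

/-- The set of separating degrees for x relative to Z. -/
def SepDegs (IZ : Ideal (S2 k)) (x : PtQ k) : Set (ℕ × ℕ) :=
  {d | ∃ f, IsSeparator IZ x f d}

/-- d is a minimal separating degree (componentwise partial order). -/
def IsMinSepDeg (IZ : Ideal (S2 k)) (x : PtQ k) (d : ℕ × ℕ) : Prop :=
  d ∈ SepDegs IZ x ∧ ∀ e ∈ SepDegs IZ x, ¬ e < d

/-- d is the unique minimal separating degree. -/
def UniqueMinSepDeg (IZ : Ideal (S2 k)) (x : PtQ k) (d : ℕ × ℕ) : Prop :=
  IsMinSepDeg IZ x d ∧ ∀ e, IsMinSepDeg IZ x e → e = d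

/-- f splits into a product of forms of degree (1,0) and (0,1), i.e. the curve f = 0
is a union of (1,0)- and (0,1)-lines. -/
def SplitsIntoLines (f : S2 k) : Prop :=
  ∃ L : Multiset (S2 k),
    (∀ l ∈ L, IsWeightedHomogeneous bw l ((1 : ℕ), (0 : ℕ)) ∨
      IsWeightedHomogeneous bw l ((0 : ℕ), (1 : ℕ))) ∧ f = L.prod

/-- `IsMFR3 I d0 d1 d2` : the ideal I has minimal bigraded free resolution
0 → ⊕ S(-d2 i) → ⊕ S(-d1 i) → ⊕ S(-d0 i) → I → 0, given by a minimal generating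
system of the listed degrees, a first-syzygy matrix A and a second-syzygy matrix B,
homogeneous of the appropriate degrees, with entries in the maximal ideal (minimality). -/
def IsMFR3 {ι₀ ι₁ ι₂ : Type} [Fintype ι₀] [Fintype ι₁] [Fintype ι₂]
    (I : Ideal (S2 k)) (d0 : ι₀ → ℕ × ℕ) (d1 : ι₁ → ℕ × ℕ) (d2 : ι₂ → ℕ × ℕ) : Prop :=
  ∃ (g : ι₀ → S2 k) (A : ι₁ → ι₀ → S2 k) (B : ι₂ → ι₁ → S2 k),
    (∀ i, IsWeightedHomogeneous bw (g i) (d0 i)) ∧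
    I = Ideal.span (Set.range g) ∧
    (∀ i j, A i j = 0 ∨ (d0 j ≤ d1 i ∧
      IsWeightedHomogeneous bw (A i j) ((d1 i).1 - (d0 j).1, (d1 i).2 - (d0 j).2))) ∧
    (∀ i j, constantCoeff (A i j) = 0) ∧
    (∀ i, ∑ j, A i j * g j = 0) ∧
    (∀ v : ι₀ → S2 k, ∑ j, v j * g j = 0 →
      ∃ c : ι₁ → S2 k, ∀ j, v j = ∑ i, c i * A i j) ∧
    (∀ i j, B i j = 0 ∨ (d1 j ≤ d2 i ∧
      IsWeightedHomogeneous bw (B i j) ((d2 i).1 - (d1 j).1, (d2 i).2 - (d1 j).2))) ∧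
    (∀ i j, constantCoeff (B i j) = 0) ∧
    (∀ i j, ∑ l, B i l * A l j = 0) ∧
    (∀ c : ι₁ → S2 k, (∀ j, ∑ i, c i * A i j = 0) →
      ∃ e : ι₂ → S2 k, ∀ i, c i = ∑ l, e l * B l i) ∧
    (∀ e : ι₂ → S2 k, (∀ i, ∑ l, e l * B l i = 0) → e = 0)

/-- A minimal free resolution of length 2 (the ACM case). -/
def IsMFR2 {ι₀ ι₁ : Type} [Fintype ι₀] [Fintype ι₁]
    (I : Ideal (S2 k)) (d0 : ι₀ → ℕ × ℕ) (d1 : ι₁ → ℕ × ℕ) : Prop :=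
  IsMFR3 I d0 d1 (fun e : Fin 0 => e.elim0)

/-- A reduced ACM zero-dimensional scheme in Q: points P_{ij} = R_i ∩ C_j indexed by a
lower-closed (staircase/Ferrers) diagram D in a grid of distinct (1,0)-lines R_i and
(0,1)-lines C_j, each containing at least one point of X. -/
structure Staircase (k : Type) [Field k] where
  a : ℕ
  b : ℕ
  R : ℕ → P1 k
  C : ℕ → P1 k
  hR : ∀ i ≤ a, ∀ i' ≤ a, R i = R i' → i = i'
  hC : ∀ j ≤ b, ∀ j' ≤ b, C j = C j' → j = j'
  D : Finset (ℕ × ℕ)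
  bound : ∀ p ∈ D, p.1 ≤ a ∧ p.2 ≤ b
  lower : ∀ p ∈ D, ∀ q : ℕ × ℕ, q.1 ≤ p.1 → q.2 ≤ p.2 → q ∈ D
  rows : ∀ i ≤ a, (i, 0) ∈ D
  cols : ∀ j ≤ b, (0, j) ∈ D

namespace Staircase

variable (T : Staircase k)

/-- The points of X. -/
def pts : Finset (PtQ k) := T.D.image (fun p => (T.R p.1, T.C p.2))

/-- The saturated ideal of X. -/
def ideal : Ideal (S2 k) := idealOfFinset T.pts

/-- #(X ∩ R_i). -/
def rowCount (i : ℕ) : ℕ := (T.D.filter (fun p => p.1 = i)).card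

/-- #(X ∩ C_j). -/
def colCount (j : ℕ) : ℕ := (T.D.filter (fun p => p.2 = j)).card

/-- (r,s) is a corner for X: P_{r-1,s}, P_{r,s-1} ∈ X but P_{r,s} ∉ X. -/
def IsCorner (r s : ℕ) : Prop :=
  0 < r ∧ 0 < s ∧ (r - 1, s) ∈ T.D ∧ (r, s - 1) ∈ T.D ∧ (r, s) ∉ T.D

/-- P_{ij} is an interior point of X: strictly dominated componentwise by some corner. -/
def Interior (i j : ℕ) : Prop :=
  (i, j) ∈ T.D ∧ ∃ r s, T.IsCorner r s ∧ i < r ∧ j < s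

/-- The saturated ideal of X minus the points of X indexed by E. -/
def residual (E : Finset (ℕ × ℕ)) : Ideal (S2 k) :=
  idealOfFinset ((T.D \ E).image (fun p => (T.R p.1, T.C p.2)))

end Staircase

/-- (i,j) is a vertex for a difference matrix c. -/
def IsVertexΔ (c : ℤ → ℤ → ℤ) (i j : ℤ) : Prop :=
  c (i - 1) j ≤ 0 ∧ c i (j - 1) ≤ 0 ∧ c (i - 1) (j - 1) = 1

/-- (i,j) is a corner for a difference matrix c. -/
def IsCornerΔ (c : ℤ → ℤ → ℤ) (i j : ℤ) : Prop :=
  c i j ≤ 0 ∧ c i (j - 1) = 1 ∧ c (i - 1) j = 1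

end
namespace Stmt1Aux
open MvPolynomial

variable {k : Type} [Field k]

lemma weight_bw (m : BiVar →₀ ℕ) :
    Finsupp.weight bw m = (m (Sum.inl 0) + m (Sum.inl 1), m (Sum.inr 0) + m (Sum.inr 1)) := by
  rw [Finsupp.weight_apply, Finsupp.sum_fintype _ _ (fun v => by simp)]
  rw [Fintype.sum_sum_type]
  simp [bw, Fin.sum_univ_two, Prod.ext_iff]

/-- exponent functions for the monomial basis of the (i,j) piece -/
noncomputable def expo (i j : ℕ) (p : Fin (i+1) × Fin (j+1)) : BiVar →₀ ℕ :=
  Finsupp.equivFunOnFinite.symm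
    (Sum.elim (fun a : Fin 2 => if a = 0 then (p.1 : ℕ) else i - p.1)
      (fun b : Fin 2 => if b = 0 then (p.2 : ℕ) else j - p.2))

lemma expo_apply_inl0 (i j : ℕ) (p : Fin (i+1) × Fin (j+1)) :
    expo i j p (Sum.inl 0) = p.1 := by simp [expo]
lemma expo_apply_inl1 (i j : ℕ) (p : Fin (i+1) × Fin (j+1)) :
    expo i j p (Sum.inl 1) = i - p.1 := by simp [expo]
lemma expo_apply_inr0 (i j : ℕ) (p : Fin (i+1) × Fin (j+1)) :
    expo i j p (Sum.inr 0) = p.2 := by simp [expo]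
lemma expo_apply_inr1 (i j : ℕ) (p : Fin (i+1) × Fin (j+1)) :
    expo i j p (Sum.inr 1) = j - p.2 := by simp [expo]

lemma expo_weight (i j : ℕ) (p : Fin (i+1) × Fin (j+1)) :
    Finsupp.weight bw (expo i j p) = (i, j) := by
  rw [weight_bw, expo_apply_inl0, expo_apply_inl1, expo_apply_inr0, expo_apply_inr1]
  have h1 : (p.1 : ℕ) ≤ i := Nat.lt_succ_iff.mp p.1.isLt
  have h2 : (p.2 : ℕ) ≤ j := Nat.lt_succ_iff.mp p.2.isLt
  simp [Nat.add_sub_cancel' h1, Nat.add_sub_cancel' h2]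

lemma expo_injective (i j : ℕ) : Function.Injective (expo i j) := by
  intro p q h
  have h0 := congrArg (fun f => f (Sum.inl 0)) h
  have h1 := congrArg (fun f => f (Sum.inr 0)) h
  simp only [expo_apply_inl0, expo_apply_inr0] at h0 h1
  exact Prod.ext (Fin.ext h0) (Fin.ext h1)

/-- basis monomials of the (i,j) piece -/
noncomputable def bmono (i j : ℕ) (p : Fin (i+1) × Fin (j+1)) : S2 k :=
  monomial (expo i j p) (1 : k)

lemma pc_eq_span (i j : ℕ) :
    weightedHomogeneousSubmodule k bw ((i, j) : ℕ × ℕ)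
      = Submodule.span k (Set.range (bmono (k := k) i j)) := by
  apply le_antisymm
  · intro f hf
    rw [mem_weightedHomogeneousSubmodule] at hf
    have hrepr := MvPolynomial.support_sum_monomial_coeff f
    rw [← hrepr]
    apply Submodule.sum_mem
    intro m hm
    have hw : Finsupp.weight bw m = (i, j) := hf (MvPolynomial.mem_support_iff.mp hm)
    rw [weight_bw] at hw
    have hwx : m (Sum.inl 0) + m (Sum.inl 1) = i := congrArg Prod.fst hw
    have hwy : m (Sum.inr 0) + m (Sum.inr 1) = j := congrArg Prod.snd hw
    have hp1 : m (Sum.inl 0) < i + 1 := by omega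
    have hp2 : m (Sum.inr 0) < j + 1 := by omega
    have hme : m = expo i j (⟨m (Sum.inl 0), hp1⟩, ⟨m (Sum.inr 0), hp2⟩) := by
      ext v
      match v with
      | Sum.inl 0 => rw [expo_apply_inl0]
      | Sum.inl 1 => rw [expo_apply_inl1]; simp; omega
      | Sum.inr 0 => rw [expo_apply_inr0]
      | Sum.inr 1 => rw [expo_apply_inr1]; simp; omega
    have : monomial m (coeff m f) = coeff m f • bmono i j (⟨m (Sum.inl 0), hp1⟩, ⟨m (Sum.inr 0), hp2⟩) := by
      rw [bmono, ← hme, smul_monomial, smul_eq_mul, mul_one]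
    rw [this]
    exact Submodule.smul_mem _ _ (Submodule.subset_span (Set.mem_range_self _))
  · rw [Submodule.span_le]
    rintro _ ⟨p, rfl⟩
    rw [SetLike.mem_coe, mem_weightedHomogeneousSubmodule, bmono]
    exact isWeightedHomogeneous_monomial _ _ _ (expo_weight i j p)

lemma bmono_linearIndependent (i j : ℕ) :
    LinearIndependent k (bmono (k := k) i j) := by
  have hb := (MvPolynomial.basisMonomials BiVar k).linearIndependent
  have : (bmono (k := k) i j) = (MvPolynomial.basisMonomials BiVar k) ∘ (expo i j) := by
    funext p
    simp [bmono, MvPolynomial.coe_basisMonomials]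
  rw [this]
  exact hb.comp _ (expo_injective i j)

instance pc_findim (i j : ℕ) :
    FiniteDimensional k (weightedHomogeneousSubmodule k bw ((i, j) : ℕ × ℕ)) := by
  rw [pc_eq_span]
  exact FiniteDimensional.span_of_finite k (Set.finite_range _)

lemma pc_finrank (i j : ℕ) :
    Module.finrank k (weightedHomogeneousSubmodule k bw ((i, j) : ℕ × ℕ)) = (i+1) * (j+1) := by
  rw [pc_eq_span, finrank_span_eq_card (bmono_linearIndependent i j)]
  simp

end Stmt1Aux
namespace Stmt1Aux
open MvPolynomial

variable {k : Type} [Field k]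

lemma whc_mul_homog {L c : S2 k} {a d : ℕ × ℕ} (hL : IsWeightedHomogeneous bw L a) :
    weightedHomogeneousComponent bw (a + d) (L * c)
      = L * weightedHomogeneousComponent bw d c := by
  classical
  have hfin := weightedHomogeneousComponent_finsupp (w := bw) c
  set D := hfin.toFinset with hD
  have hc : c = ∑ d' ∈ D, weightedHomogeneousComponent bw d' c := by
    rw [← finsum_eq_sum _ hfin, sum_weightedHomogeneousComponent]
  have hnot : ∀ d' ∉ D, weightedHomogeneousComponent bw d' c = 0 := by
    intro d' hd'
    exact not_not.mp (fun h => hd' ((Set.Finite.mem_toFinset hfin).mpr h))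
  conv_lhs => rw [hc]
  rw [Finset.mul_sum, map_sum]
  have hterm : ∀ d' ∈ D, weightedHomogeneousComponent bw (a + d)
      (L * weightedHomogeneousComponent bw d' c)
      = if d' = d then L * weightedHomogeneousComponent bw d c else 0 := by
    intro d' _
    by_cases hz : L * weightedHomogeneousComponent bw d' c = 0
    · rw [hz, map_zero]
      split_ifs with h
      · rw [h] at hz; exact hz.symm
      · rfl
    · have hh : IsWeightedHomogeneous bw (L * weightedHomogeneousComponent bw d' c) (a + d') :=
        hL.mul (weightedHomogeneousComponent_isWeightedHomogeneous d' c)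
      by_cases h : d' = d
      · subst h
        rw [hh.weightedHomogeneousComponent_same, if_pos rfl]
      · rw [if_neg h]
        exact hh.weightedHomogeneousComponent_ne _ (by
          intro hcon
          exact h (by
            have := add_left_cancel hcon
            exact this.symm))
    
  rw [Finset.sum_congr rfl hterm]
  by_cases hdD : d ∈ D
  · rw [Finset.sum_ite_eq' D d (fun _ => L * weightedHomogeneousComponent bw d c), if_pos hdD]
  · rw [Finset.sum_ite_eq' D d (fun _ => L * weightedHomogeneousComponent bw d c), if_neg hdD,
      hnot d hdD, mul_zero]

lemma homog_cancel {L h : S2 k} {a d : ℕ × ℕ} (hL : IsWeightedHomogeneous bw L a)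
    (hL0 : L ≠ 0) (hh : IsWeightedHomogeneous bw (L * h) (a + d)) :
    IsWeightedHomogeneous bw h d := by
  have h1 : weightedHomogeneousComponent bw (a + d) (L * h) = L * h :=
    hh.weightedHomogeneousComponent_same
  rw [whc_mul_homog hL] at h1
  have h2 : h = weightedHomogeneousComponent bw d h := by
    have := mul_left_cancel₀ hL0 h1
    exact this.symm
  rw [h2]
  exact weightedHomogeneousComponent_isWeightedHomogeneous d h

/-- Extracting the degree-(a+d) part of an element of I + (L). -/
lemma mem_sup_span_homog {I : Ideal (S2 k)} (hbih : IsBihom I) {L m : S2 k} {a d : ℕ × ℕ}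
    (hL : IsWeightedHomogeneous bw L a)
    (hm : m ∈ I ⊔ Ideal.span {L}) (hmh : IsWeightedHomogeneous bw m (a + d)) :
    ∃ f c : S2 k, f ∈ I ∧ IsWeightedHomogeneous bw f (a + d) ∧
      IsWeightedHomogeneous bw c d ∧ m = f + L * c := by
  rw [Submodule.mem_sup] at hm
  obtain ⟨f0, hf0, z, hz, hm⟩ := hm
  rw [Ideal.mem_span_singleton] at hz
  obtain ⟨c0, rfl⟩ := hz
  have := congrArg (weightedHomogeneousComponent bw (a + d)) hm
  rw [hmh.weightedHomogeneousComponent_same, map_add] at this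
  rw [whc_mul_homog hL] at this
  refine ⟨weightedHomogeneousComponent bw (a + d) f0, weightedHomogeneousComponent bw d c0,
    hbih f0 hf0 (a + d), weightedHomogeneousComponent_isWeightedHomogeneous _ _,
    weightedHomogeneousComponent_isWeightedHomogeneous d c0, this.symm⟩

/-- Evaluation of a bihomogeneous polynomial at scaled representatives. -/
lemma eval_smul_smul {f : S2 k} {i j : ℕ} (hf : IsWeightedHomogeneous bw f (i, j))
    (c c' : k) (a b : Fin 2 → k) :
    eval (Sum.elim (c • a) (c' • b)) f = c ^ i * c' ^ j * eval (Sum.elim a b) f := by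
  rw [eval_eq', eval_eq', Finset.mul_sum]
  apply Finset.sum_congr rfl
  intro m hm
  have hw : Finsupp.weight bw m = (i, j) := hf (mem_support_iff.mp hm)
  rw [weight_bw] at hw
  have hwx : m (Sum.inl 0) + m (Sum.inl 1) = i := congrArg Prod.fst hw
  have hwy : m (Sum.inr 0) + m (Sum.inr 1) = j := congrArg Prod.snd hw
  rw [Fintype.prod_sum_type, Fintype.prod_sum_type]
  simp only [Sum.elim_inl, Sum.elim_inr, Pi.smul_apply, smul_eq_mul]
  rw [Fin.prod_univ_two, Fin.prod_univ_two, Fin.prod_univ_two, Fin.prod_univ_two]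
  rw [mul_pow, mul_pow, mul_pow, mul_pow, ← hwx, ← hwy, pow_add, pow_add]
  ring

end Stmt1Aux
namespace Stmt1Aux
open MvPolynomial Module

variable {k : Type} [Field k]

/-- shorthands -/
noncomputable abbrev pc (k : Type) [Field k] (i j : ℕ) : Submodule k (S2 k) :=
  weightedHomogeneousSubmodule k bw ((i, j) : ℕ × ℕ)

lemma Ipiece_le (I : Ideal (S2 k)) (i j : ℕ) : Ipiece I (i, j) ≤ pc k i j := inf_le_right

instance Ipiece_findim (I : Ideal (S2 k)) (i j : ℕ) :
    FiniteDimensional k (Ipiece I (i, j)) :=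
  Submodule.finiteDimensional_of_le (Ipiece_le I i j)

lemma dimI_le_dimS (I : Ideal (S2 k)) (i j : ℕ) :
    finrank k (Ipiece I (i, j)) ≤ finrank k (pc k i j) :=
  Submodule.finrank_mono (Ipiece_le I i j)

lemma hilb_def' (I : Ideal (S2 k)) (i j : ℕ) :
    hilb I i j = finrank k (pc k i j) - finrank k (Ipiece I (i, j)) := rfl

lemma hilb_cast (I : Ideal (S2 k)) (i j : ℕ) :
    (hilb I i j : ℤ) = (finrank k (pc k i j) : ℤ) - finrank k (Ipiece I (i, j)) :=
  Nat.cast_sub (dimI_le_dimS I i j)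

lemma mem_Ipiece (I : Ideal (S2 k)) (i j : ℕ) (f : S2 k) :
    f ∈ Ipiece I (i, j) ↔ f ∈ I ∧ IsWeightedHomogeneous bw f (i, j) := by
  constructor
  · rintro ⟨h1, h2⟩; exact ⟨h1, h2⟩
  · rintro ⟨h1, h2⟩; exact ⟨h1, h2⟩

/-- the ideal piece as a subspace of the full piece -/
noncomputable def Jp (I : Ideal (S2 k)) (i j : ℕ) : Submodule k (pc k i j) :=
  (Ipiece I (i, j)).comap (pc k i j).subtype

lemma mem_Jp (I : Ideal (S2 k)) (i j : ℕ) (f : pc k i j) :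
    f ∈ Jp I i j ↔ (f : S2 k) ∈ I := by
  rw [Jp, Submodule.mem_comap, mem_Ipiece]
  exact ⟨fun h => h.1, fun h => ⟨h, f.2⟩⟩

lemma finrank_Jp (I : Ideal (S2 k)) (i j : ℕ) :
    finrank k (Jp I i j) = finrank k (Ipiece I (i, j)) :=
  LinearEquiv.finrank_eq (Submodule.comapSubtypeEquivOfLe (Ipiece_le I i j))

lemma hilb_eq_finrank_quot (I : Ideal (S2 k)) (i j : ℕ) :
    hilb I i j = finrank k (pc k i j ⧸ Jp I i j) := by
  have h := Submodule.finrank_quotient_add_finrank (Jp I i j)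
  rw [finrank_Jp] at h
  rw [hilb_def']
  omega

section MulMap

variable (I : Ideal (S2 k)) (L : S2 k) {a b : ℕ}

/-- multiplication by a form, into the quotient by the ideal piece -/
noncomputable def mulQ (hL : IsWeightedHomogeneous bw L (a, b)) (i j : ℕ) :
    pc k i j →ₗ[k] (pc k (a + i) (b + j) ⧸ Jp I (a + i) (b + j)) :=
  (Jp I (a + i) (b + j)).mkQ.comp
    (LinearMap.codRestrict (pc k (a + i) (b + j))
      ((LinearMap.mulLeft k L).comp (pc k i j).subtype)
      (fun f => hL.mul f.2))

lemma mulQ_apply (hL : IsWeightedHomogeneous bw L (a, b)) (i j : ℕ) (f : pc k i j) :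
    mulQ I L hL i j f = Submodule.Quotient.mk ⟨L * (f : S2 k), hL.mul f.2⟩ := rfl

lemma ker_mulQ (hL : IsWeightedHomogeneous bw L (a, b)) (i j : ℕ)
    (hnzd : ∀ h : S2 k, L * h ∈ I → h ∈ I) :
    LinearMap.ker (mulQ I L hL i j) = Jp I i j := by
  ext f
  rw [LinearMap.mem_ker, mulQ_apply, Submodule.Quotient.mk_eq_zero, mem_Jp, mem_Jp]
  exact ⟨fun h => hnzd _ h, fun h => Ideal.mul_mem_left _ _ h⟩

lemma hilb_le (hL : IsWeightedHomogeneous bw L (a, b)) (i j : ℕ)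
    (hnzd : ∀ h : S2 k, L * h ∈ I → h ∈ I) :
    hilb I i j ≤ hilb I (a + i) (b + j) := by
  have hr := LinearMap.finrank_range_add_finrank_ker (mulQ I L hL i j)
  rw [ker_mulQ I L hL i j hnzd, finrank_Jp] at hr
  have h1 : finrank k (LinearMap.range (mulQ I L hL i j))
      ≤ finrank k (pc k (a + i) (b + j) ⧸ Jp I (a + i) (b + j)) :=
    Submodule.finrank_le _
  have h2 := hilb_eq_finrank_quot I (a + i) (b + j)
  rw [hilb_def' I i j]
  have h4 := dimI_le_dimS I i j
  omega

lemma hilb_eq (hbih : IsBihom I) (hL : IsWeightedHomogeneous bw L (a, b)) (i j : ℕ)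
    (hnzd : ∀ h : S2 k, L * h ∈ I → h ∈ I)
    (hsub : ∀ f : S2 k, IsWeightedHomogeneous bw f (a + i, b + j) → f ∈ I ⊔ Ideal.span {L}) :
    hilb I (a + i) (b + j) = hilb I i j := by
  have hsurj : LinearMap.range (mulQ I L hL i j) = ⊤ := by
    rw [LinearMap.range_eq_top]
    intro q
    obtain ⟨g, rfl⟩ := Submodule.mkQ_surjective _ q
    have hg : IsWeightedHomogeneous bw (g : S2 k) (a + i, b + j) := g.2
    obtain ⟨f, c, hfI, hfh, hch, hgeq⟩ :=
      mem_sup_span_homog hbih (d := ((i, j) : ℕ × ℕ)) hL (hsub _ hg) hg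
    refine ⟨⟨c, hch⟩, ?_⟩
    rw [mulQ_apply]
    show Submodule.Quotient.mk _ = Submodule.Quotient.mk g
    rw [Submodule.Quotient.eq, mem_Jp]
    show L * c - (g : S2 k) ∈ I
    rw [hgeq]
    have : L * c - (f + L * c) = -f := by ring
    rw [this]
    exact neg_mem hfI
  have hr := LinearMap.finrank_range_add_finrank_ker (mulQ I L hL i j)
  rw [ker_mulQ I L hL i j hnzd, finrank_Jp, hsurj] at hr
  have h2 := hilb_eq_finrank_quot I (a + i) (b + j)
  have h3 : finrank k (⊤ : Submodule k (pc k (a + i) (b + j) ⧸ Jp I (a + i) (b + j)))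
      = finrank k (pc k (a + i) (b + j) ⧸ Jp I (a + i) (b + j)) := finrank_top k _
  rw [hilb_def' I i j]
  have h4 := dimI_le_dimS I i j
  omega

end MulMap

end Stmt1Aux
namespace Stmt1Aux
open MvPolynomial Module

variable {k : Type} [Field k]

lemma whomog_congr {f : S2 k} {d e : ℕ × ℕ} (h : IsWeightedHomogeneous bw f d) (hde : d = e) :
    IsWeightedHomogeneous bw f e := hde ▸ h

/-- multiplication by a form between ideal pieces -/
noncomputable def mulIp (I : Ideal (S2 k)) (L : S2 k) (i j i' j' : ℕ)
    (hmem : ∀ f : S2 k, f ∈ Ipiece I (i, j) → L * f ∈ Ipiece I (i', j')) :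
    Ipiece I (i, j) →ₗ[k] Ipiece I (i', j') :=
  LinearMap.codRestrict _ ((LinearMap.mulLeft k L).comp (Ipiece I (i, j)).subtype)
    (fun f => hmem f f.2)

lemma mulIp_apply (I : Ideal (S2 k)) (L : S2 k) (i j i' j' : ℕ) (hmem) (f : Ipiece I (i, j)) :
    ((mulIp I L i j i' j' hmem f : Ipiece I (i', j')) : S2 k) = L * (f : S2 k) := rfl

lemma mulIp_mem (I : Ideal (S2 k)) {L : S2 k} {a b : ℕ} (hL : IsWeightedHomogeneous bw L (a, b))
    {i j i' j' : ℕ} (h1 : a + i = i') (h2 : b + j = j') :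
    ∀ f : S2 k, f ∈ Ipiece I (i, j) → L * f ∈ Ipiece I (i', j') := by
  intro f hf
  rw [mem_Ipiece] at hf ⊢
  exact ⟨Ideal.mul_mem_left _ _ hf.1,
    whomog_congr (hL.mul hf.2) (by rw [Prod.mk_add_mk, h1, h2])⟩

lemma dimI_mono (I : Ideal (S2 k)) {L : S2 k} {a b : ℕ} (hL : IsWeightedHomogeneous bw L (a, b))
    (hL0 : L ≠ 0) {i j i' j' : ℕ} (h1 : a + i = i') (h2 : b + j = j') :
    finrank k (Ipiece I (i, j)) ≤ finrank k (Ipiece I (i', j')) := by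
  apply LinearMap.finrank_le_finrank_of_injective
    (f := mulIp I L i j i' j' (mulIp_mem I hL h1 h2))
  intro f g hfg
  have : L * (f : S2 k) = L * (g : S2 k) := by
    have := congrArg (fun h : Ipiece I (i', j') => (h : S2 k)) hfg
    simpa [mulIp_apply] using this
  exact Subtype.ext (mul_left_cancel₀ hL0 this)

lemma dimI_superadd (I : Ideal (S2 k)) (L L' : S2 k)
    (hL : IsWeightedHomogeneous bw L ((1 : ℕ), (0 : ℕ)))
    (hL' : IsWeightedHomogeneous bw L' ((0 : ℕ), (1 : ℕ)))
    (hL0 : L ≠ 0) (hL'0 : L' ≠ 0) (hLp : Prime L) (hnd : ¬ L ∣ L')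
    (hnzd : ∀ h : S2 k, L * h ∈ I → h ∈ I) (i j : ℕ) :
    finrank k (Ipiece I (i, 1+j)) + finrank k (Ipiece I (1+i, j))
      ≤ finrank k (Ipiece I (1+i, 1+j)) + finrank k (Ipiece I (i, j)) := by
  classical
  set A := Ipiece I (i, 1+j)
  set B := Ipiece I (1+i, j)
  set T := Ipiece I (1+i, 1+j)
  let φ : (A × B) →ₗ[k] T :=
    (mulIp I L i (1+j) (1+i) (1+j) (mulIp_mem I hL rfl (by omega))).coprod
    (mulIp I L' (1+i) j (1+i) (1+j) (mulIp_mem I hL' (by omega) rfl))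
  let χ : Ipiece I (i, j) →ₗ[k] A × B :=
    (mulIp I L' i j i (1+j) (mulIp_mem I hL' (by omega) rfl)).prod
    (-(mulIp I L i j (1+i) j (mulIp_mem I hL rfl (by omega))))
  have hχval : ∀ h : Ipiece I (i, j),
      ((χ h).1 : S2 k) = L' * (h : S2 k) ∧ ((χ h).2 : S2 k) = -(L * (h : S2 k)) := by
    intro h; constructor <;> rfl
  have hχinj : Function.Injective χ := by
    intro f g hfg
    have h1 : L' * (f : S2 k) = L' * (g : S2 k) := by
      have := congrArg (fun p : A × B => (p.1 : S2 k)) hfg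
      simpa [(hχval f).1, (hχval g).1] using this
    exact Subtype.ext (mul_left_cancel₀ hL'0 h1)
  have hrange : LinearMap.range χ = LinearMap.ker φ := by
    apply le_antisymm
    · rintro _ ⟨h, rfl⟩
      rw [LinearMap.mem_ker]
      apply Subtype.ext
      show L * ((χ h).1 : S2 k) + L' * ((χ h).2 : S2 k) = 0
      rw [(hχval h).1, (hχval h).2]
      ring
    · rintro ⟨f, g⟩ hker
      rw [LinearMap.mem_ker] at hker
      have hval : L * (f : S2 k) + L' * (g : S2 k) = 0 := Subtype.ext_iff.mp hker
      have hdvd : L ∣ L' * (g : S2 k) := ⟨-(f : S2 k), by linear_combination hval⟩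
      rcases hLp.2.2 _ _ hdvd with h | h
      · exact absurd h hnd
      · obtain ⟨h0, hg0⟩ := h
        have hf0 : (f : S2 k) = -(L' * h0) := by
          apply mul_left_cancel₀ hL0
          rw [mul_neg]
          linear_combination hval - L' * hg0
        have hh0I : h0 ∈ I := hnzd h0 (by rw [← hg0]; exact g.2.1)
        have hgh : IsWeightedHomogeneous bw (L * h0) (1+i, j) := by
          rw [← hg0]; exact g.2.2
        have hh0hom : IsWeightedHomogeneous bw h0 (i, j) :=
          homog_cancel (a := ((1 : ℕ), (0 : ℕ))) (d := ((i : ℕ), (j : ℕ))) hL hL0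
            (whomog_congr hgh (by rw [Prod.mk_add_mk, Prod.ext_iff]; omega))
        refine ⟨⟨-h0, neg_mem (by rw [mem_Ipiece]; exact ⟨hh0I, hh0hom⟩)⟩, ?_⟩
        apply Prod.ext
        · apply Subtype.ext
          rw [(hχval _).1]
          show L' * (-h0) = (f : S2 k)
          rw [hf0]; ring
        · apply Subtype.ext
          rw [(hχval _).2]
          show -(L * (-h0)) = (g : S2 k)
          rw [hg0]; ring
  have hr := LinearMap.finrank_range_add_finrank_ker φ
  have hk : finrank k (LinearMap.ker φ) = finrank k (Ipiece I (i, j)) := by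
    rw [← hrange, LinearMap.finrank_range_of_inj hχinj]
  have hprod : finrank k (A × B) = finrank k A + finrank k B := Module.finrank_prod
  have hle : finrank k (LinearMap.range φ) ≤ finrank k T := Submodule.finrank_le _
  omega

end Stmt1Aux
namespace Stmt1Aux
open MvPolynomial Module

variable {k : Type} [Field k]

/-- The linear forms we will use. -/
noncomputable def Lx (t : k) : S2 k := X (Sum.inl 0) + C t * X (Sum.inl 1)
noncomputable def Ly (t : k) : S2 k := X (Sum.inr 0) + C t * X (Sum.inr 1)

lemma Lx_homog (t : k) : IsWeightedHomogeneous bw (Lx t) ((1 : ℕ), (0 : ℕ)) := by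
  apply IsWeightedHomogeneous.add
  · exact isWeightedHomogeneous_X k bw (Sum.inl 0)
  · rw [← smul_eq_C_mul]
    exact Submodule.smul_mem (weightedHomogeneousSubmodule k bw ((1 : ℕ), (0 : ℕ))) t
      (isWeightedHomogeneous_X k bw (Sum.inl 1))

lemma Ly_homog (t : k) : IsWeightedHomogeneous bw (Ly t) ((0 : ℕ), (1 : ℕ)) := by
  apply IsWeightedHomogeneous.add
  · exact isWeightedHomogeneous_X k bw (Sum.inr 0)
  · rw [← smul_eq_C_mul]
    exact Submodule.smul_mem (weightedHomogeneousSubmodule k bw ((0 : ℕ), (1 : ℕ))) t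
      (isWeightedHomogeneous_X k bw (Sum.inr 1))

lemma coeff_Lx (t : k) : coeff (Finsupp.single (Sum.inl 0) 1) (Lx t) = 1 := by
  rw [Lx, coeff_add, coeff_X, coeff_C_mul, coeff_X', if_pos rfl]
  rw [if_neg (by
    intro hcon
    have := congrArg (fun f : BiVar →₀ ℕ => f (Sum.inl 1)) hcon
    simpa using this)]
  ring

lemma Lx_ne_zero (t : k) : Lx t ≠ 0 := fun h => by
  have := coeff_Lx t
  rw [h, coeff_zero] at this
  exact one_ne_zero this.symm

lemma coeff_Ly (t : k) : coeff (Finsupp.single (Sum.inr 0) 1) (Ly t) = 1 := by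
  rw [Ly, coeff_add, coeff_X, coeff_C_mul, coeff_X', if_pos rfl]
  rw [if_neg (by
    intro hcon
    have := congrArg (fun f : BiVar →₀ ℕ => f (Sum.inr 1)) hcon
    simpa using this)]
  ring

lemma Ly_ne_zero (t : k) : Ly t ≠ 0 := fun h => by
  have := coeff_Ly t
  rw [h, coeff_zero] at this
  exact one_ne_zero this.symm

lemma prime_X0 : Prime (X (Sum.inl 0) : S2 k) := by
  let e1 := renameEquiv k (finSumFinEquiv (m := 2) (n := 2))
  let e2 := finSuccEquiv k 3
  rw [← MulEquiv.prime_iff (e1.toMulEquiv.trans e2.toMulEquiv)]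
  have h1 : (e1.toMulEquiv.trans e2.toMulEquiv) (X (Sum.inl 0) : S2 k) = Polynomial.X := by
    show e2 (e1 (X (Sum.inl 0))) = Polynomial.X
    rw [show e1 (X (Sum.inl 0) : S2 k) = X (0 : Fin 4) by
      simp [e1, renameEquiv_apply, rename_X]
      rfl]
    exact finSuccEquiv_X_zero
  rw [h1]
  exact Polynomial.prime_X

lemma prime_Y0 : Prime (X (Sum.inr 0) : S2 k) := by
  let eswap := renameEquiv k (Equiv.sumComm (Fin 2) (Fin 2))
  rw [← MulEquiv.prime_iff eswap.toMulEquiv]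
  show Prime (eswap (X (Sum.inr 0) : S2 k))
  have : eswap (X (Sum.inr 0) : S2 k) = X (Sum.inl 0) := by
    simp [eswap, renameEquiv_apply, rename_X]
  rw [this]
  exact prime_X0

/-- the substitution x0 ↦ x0 - t x1 as an algebra automorphism -/
noncomputable def shiftX (t : k) : S2 k ≃ₐ[k] S2 k :=
  AlgEquiv.ofAlgHom
    (aeval (fun v => if v = Sum.inl 0 then X (Sum.inl 0) - C t * X (Sum.inl 1) else X v))
    (aeval (fun v => if v = Sum.inl 0 then X (Sum.inl 0) + C t * X (Sum.inl 1) else X v))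
    (by
      apply algHom_ext
      intro v
      rcases v with a | b
      · fin_cases a <;> simp
      · fin_cases b <;> simp)
    (by
      apply algHom_ext
      intro v
      rcases v with a | b
      · fin_cases a <;> simp
      · fin_cases b <;> simp)

lemma shiftX_Lx (t : k) : shiftX t (Lx t) = X (Sum.inl 0) := by
  show (aeval _) (Lx t) = _
  simp [Lx, algebraMap_eq]

lemma prime_Lx (t : k) : Prime (Lx t) := by
  rw [← MulEquiv.prime_iff (shiftX t).toMulEquiv]
  show Prime (shiftX t (Lx t))
  rw [shiftX_Lx]
  exact prime_X0

/-- the substitution y0 ↦ y0 - t y1 as an algebra automorphism -/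
noncomputable def shiftY (t : k) : S2 k ≃ₐ[k] S2 k :=
  AlgEquiv.ofAlgHom
    (aeval (fun v => if v = Sum.inr 0 then X (Sum.inr 0) - C t * X (Sum.inr 1) else X v))
    (aeval (fun v => if v = Sum.inr 0 then X (Sum.inr 0) + C t * X (Sum.inr 1) else X v))
    (by
      apply algHom_ext
      intro v
      rcases v with a | b
      · fin_cases a <;> simp
      · fin_cases b <;> simp)
    (by
      apply algHom_ext
      intro v
      rcases v with a | b
      · fin_cases a <;> simp
      · fin_cases b <;> simp)

lemma shiftY_Ly (t : k) : shiftY t (Ly t) = X (Sum.inr 0) := by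
  show (aeval _) (Ly t) = _
  simp [Ly, algebraMap_eq]

lemma prime_Ly (t : k) : Prime (Ly t) := by
  rw [← MulEquiv.prime_iff (shiftY t).toMulEquiv]
  show Prime (shiftY t (Ly t))
  rw [shiftY_Ly]
  exact prime_Y0

lemma Lx_not_dvd_Ly (t t' : k) : ¬ (Lx t ∣ Ly t') := by
  rintro ⟨c, hc⟩
  set ev := aeval (R := k)
    (fun v : BiVar => if v = Sum.inl 0 then (C (-t) : S2 k)
      else if v = Sum.inl 1 then 1 else X v) with hev
  have h1 : ev (Lx t) = 0 := by
    simp [hev, Lx, algebraMap_eq, ← C_add]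
  have h2 : ev (Ly t') = Ly t' := by
    simp [hev, Ly, algebraMap_eq]
  have := congrArg ev hc
  rw [map_mul, h1, h2, zero_mul] at this
  exact Ly_ne_zero t' this

lemma Ly_not_dvd_Lx (t t' : k) : ¬ (Ly t ∣ Lx t') := by
  rintro ⟨c, hc⟩
  set ev := aeval (R := k)
    (fun v : BiVar => if v = Sum.inr 0 then (C (-t) : S2 k)
      else if v = Sum.inr 1 then 1 else X v) with hev
  have h1 : ev (Ly t) = 0 := by
    simp [hev, Ly, algebraMap_eq, ← C_add]
  have h2 : ev (Lx t') = Lx t' := by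
    simp [hev, Lx, algebraMap_eq]
  have := congrArg ev hc
  rw [map_mul, h1, h2, zero_mul] at this
  exact Lx_ne_zero t' this

end Stmt1Aux
namespace Stmt1Aux
open MvPolynomial Module

variable {k : Type} [Field k] [IsAlgClosed k]

/-- the irrelevant-type ideal generated by the products x_a y_b -/
noncomputable def Bid (k : Type) [Field k] : Ideal (S2 k) :=
  Ideal.span (Set.range (fun ab : Fin 2 × Fin 2 => X (Sum.inl ab.1) * X (Sum.inr ab.2)))

lemma satB (I : Ideal (S2 k)) (hsat : IsSat I) :
    ∀ n : ℕ, ∀ f : S2 k, (∀ g ∈ (Bid k) ^ n, g * f ∈ I) → f ∈ I := by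
  intro n
  induction n with
  | zero =>
    intro f h
    have h1 := h 1 (by rw [pow_zero, Ideal.one_eq_top]; trivial)
    rwa [one_mul] at h1
  | succ n ih =>
    intro f h
    apply ih
    intro g hg
    apply hsat
    intro a b
    have hxy : X (Sum.inl a) * X (Sum.inr b) ∈ Bid k :=
      Ideal.subset_span ⟨(a, b), rfl⟩
    have hmem : g * (X (Sum.inl a) * X (Sum.inr b)) ∈ (Bid k) ^ (n + 1) := by
      rw [pow_succ]
      exact Ideal.mul_mem_mul hg hxy
    have := h _ hmem
    have heq : X (Sum.inl a) * X (Sum.inr b) * (g * f)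
        = g * (X (Sum.inl a) * X (Sum.inr b)) * f := by ring
    rw [heq]
    exact this

lemma xy_mem_radical (I J : Ideal (S2 k)) (hbih : IsBihom I) (hIJ : I ≤ J) {L : S2 k} {a b : ℕ}
    (hL : IsWeightedHomogeneous bw L (a, b)) (hLJ : L ∈ J)
    (hnv : ∀ P ∈ biZeroLocus I, evalPt P L ≠ 0) (a' b' : Fin 2) :
    X (Sum.inl a') * X (Sum.inr b') ∈ J.radical := by
  rw [← vanishingIdeal_zeroLocus_eq_radical (K := k), mem_vanishingIdeal_iff]
  intro x hx
  rw [mem_zeroLocus_iff] at hx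
  simp only [aeval_eq_eval] at hx ⊢
  by_cases hA : (fun a0 : Fin 2 => x (Sum.inl a0)) = 0
  · rw [eval_mul, eval_X]
    have : x (Sum.inl a') = 0 := congrFun hA a'
    rw [this, zero_mul]
  · by_cases hB : (fun b0 : Fin 2 => x (Sum.inr b0)) = 0
    · rw [eval_mul, eval_X, eval_X]
      have : x (Sum.inr b') = 0 := congrFun hB b'
      rw [this, mul_zero]
    · exfalso
      set A := (fun a0 : Fin 2 => x (Sum.inl a0)) with hAdef
      set B := (fun b0 : Fin 2 => x (Sum.inr b0)) with hBdef
      set PA := Projectivization.mk k A hA with hPA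
      set PB := Projectivization.mk k B hB with hPB
      have hxel : Sum.elim A B = x := by
        funext v; cases v <;> rfl
      obtain ⟨u, hu⟩ := (Projectivization.mk_eq_mk_iff k _ _ (Projectivization.rep_nonzero _)
        hA).mp (Projectivization.mk_rep (Projectivization.mk k A hA))
      obtain ⟨u', hu'⟩ := (Projectivization.mk_eq_mk_iff k _ _ (Projectivization.rep_nonzero _)
        hB).mp (Projectivization.mk_rep (Projectivization.mk k B hB))
      have hrepA : PA.rep = (u : k) • A := hu.symm
      have hrepB : PB.rep = (u' : k) • B := hu'.symm
      have hP : (PA, PB) ∈ biZeroLocus I := by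
        intro f hf d
        show eval (Sum.elim PA.rep PB.rep) _ = 0
        rw [hrepA, hrepB]
        have hhom : IsWeightedHomogeneous bw (weightedHomogeneousComponent bw d f) (d.1, d.2) :=
          weightedHomogeneousComponent_isWeightedHomogeneous d f
        rw [eval_smul_smul hhom]
        rw [hxel]
        rw [hx _ (hIJ (hbih f hf d))]
        ring
      apply hnv (PA, PB) hP
      show eval (Sum.elim PA.rep PB.rep) L = 0
      rw [hrepA, hrepB, eval_smul_smul hL, hxel, hx _ hLJ]
      ring

lemma nzd_of_nonvanishing (I : Ideal (S2 k)) (hbih : IsBihom I) (hsat : IsSat I)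
    {L : S2 k} {a b : ℕ} (hL : IsWeightedHomogeneous bw L (a, b))
    (hnv : ∀ P ∈ biZeroLocus I, evalPt P L ≠ 0) :
    ∀ h : S2 k, L * h ∈ I → h ∈ I := by
  intro h hLh
  set J := I.colon (Ideal.span {h}) with hJ
  have hIJ : I ≤ J := fun f hf => Submodule.mem_colon_span_singleton.mpr (Ideal.mul_mem_right _ _ hf)
  have hLJ : L ∈ J := Submodule.mem_colon_span_singleton.mpr hLh
  have hrad : Bid k ≤ J.radical := by
    rw [Bid, Ideal.span_le]
    rintro _ ⟨⟨a', b'⟩, rfl⟩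
    exact xy_mem_radical I J hbih hIJ hL hLJ hnv a' b'
  obtain ⟨n, hn⟩ := Ideal.exists_pow_le_of_le_radical_of_fg hrad
    (Submodule.fg_span (Set.finite_range _))
  apply satB I hsat n h
  intro g hg
  exact Submodule.mem_colon_span_singleton.mp (hn hg)

lemma exists_quadrant (I : Ideal (S2 k)) (hbih : IsBihom I)
    {L : S2 k} {a b : ℕ} (hL : IsWeightedHomogeneous bw L (a, b))
    (hnv : ∀ P ∈ biZeroLocus I, evalPt P L ≠ 0) :
    ∃ E : ℕ, ∀ i j : ℕ, E ≤ i → E ≤ j →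
      ∀ f : S2 k, IsWeightedHomogeneous bw f (i, j) → f ∈ I ⊔ Ideal.span {L} := by
  classical
  set K := I ⊔ Ideal.span {L} with hK
  have hIK : I ≤ K := le_sup_left
  have hLK : L ∈ K := (le_sup_right : Ideal.span {L} ≤ K)
    (Ideal.mem_span_singleton_self L)
  have hrad := xy_mem_radical I K hbih hIK hL hLK hnv
  have hpow : ∀ ab : Fin 2 × Fin 2,
      ∃ n : ℕ, (X (Sum.inl ab.1) * X (Sum.inr ab.2)) ^ n ∈ K := by
    intro ab
    exact Ideal.mem_radical_iff.mp (hrad ab.1 ab.2)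
  choose nf hnf using hpow
  set N := (nf (0,0)) + (nf (0,1)) + (nf (1,0)) + (nf (1,1)) + 1 with hN
  refine ⟨2 * N, ?_⟩
  intro i j hi hj f hf
  have hrepr := MvPolynomial.support_sum_monomial_coeff f
  rw [← hrepr]
  apply Submodule.sum_mem
  intro m hm
  have hw : Finsupp.weight bw m = (i, j) := hf (mem_support_iff.mp hm)
  rw [weight_bw] at hw
  have hwx : m (Sum.inl 0) + m (Sum.inl 1) = i := congrArg Prod.fst hw
  have hwy : m (Sum.inr 0) + m (Sum.inr 1) = j := congrArg Prod.snd hw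
  have hax : ∃ a' : Fin 2, N ≤ m (Sum.inl a') := by
    by_contra hcon
    push_neg at hcon
    have h0 := hcon 0; have h1 := hcon 1
    omega
  have hby : ∃ b' : Fin 2, N ≤ m (Sum.inr b') := by
    by_contra hcon
    push_neg at hcon
    have h0 := hcon 0; have h1 := hcon 1
    omega
  obtain ⟨a', ha'⟩ := hax
  obtain ⟨b', hb'⟩ := hby
  set q := nf (a', b') with hq
  have hqN : q ≤ N := by
    fin_cases a' <;> fin_cases b' <;> simp [hq, hN] <;> omega
  set s := Finsupp.single (Sum.inl a') q + Finsupp.single (Sum.inr b') q with hs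
  have hsm : s ≤ m := by
    rw [Finsupp.le_def]
    intro v
    rw [hs, Finsupp.add_apply]
    rcases v with av | bv
    · have h2 : (Finsupp.single (Sum.inr b') q : BiVar →₀ ℕ) (Sum.inl av) = 0 :=
        Finsupp.single_eq_of_ne (by simp)
      rw [h2, add_zero]
      by_cases hv : a' = av
      · subst hv; rw [Finsupp.single_eq_same]; omega
      · rw [Finsupp.single_eq_of_ne' (by simpa using hv)]; omega
    · have h2 : (Finsupp.single (Sum.inl a') q : BiVar →₀ ℕ) (Sum.inr bv) = 0 :=
        Finsupp.single_eq_of_ne (by simp)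
      rw [h2, zero_add]
      by_cases hv : b' = bv
      · subst hv; rw [Finsupp.single_eq_same]; omega
      · rw [Finsupp.single_eq_of_ne' (by simpa using hv)]; omega
  have hfact : monomial m (coeff m f)
      = monomial (m - s) (coeff m f) * (X (Sum.inl a') * X (Sum.inr b')) ^ q := by
    rw [mul_pow, X_pow_eq_monomial, X_pow_eq_monomial, monomial_mul, monomial_mul]
    congr 1
    · rw [← hs, tsub_add_cancel_of_le hsm]
    · ring
  rw [hfact]
  exact Ideal.mul_mem_left _ _ (hnf (a', b'))

end Stmt1Aux
namespace Stmt1Aux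
open MvPolynomial Module

variable {k : Type} [Field k] [IsAlgClosed k]

lemma evalPt_Lx (P : PtQ k) (t : k) :
    evalPt P (Lx t) = P.1.rep 0 + t * P.1.rep 1 := by
  simp [evalPt, Lx]

lemma evalPt_Ly (P : PtQ k) (t : k) :
    evalPt P (Ly t) = P.2.rep 0 + t * P.2.rep 1 := by
  simp [evalPt, Ly]

lemma exists_good_tx {Z : Set (PtQ k)} (hfin : Z.Finite) :
    ∃ t : k, ∀ P ∈ Z, evalPt P (Lx t) ≠ 0 := by
  set F : PtQ k → k := fun P => -(P.1.rep 0) / (P.1.rep 1) with hF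
  obtain ⟨t, ht⟩ := ((hfin.image F).infinite_compl).nonempty
  refine ⟨t, fun P hP hzero => ?_⟩
  rw [evalPt_Lx] at hzero
  have hrepne := Projectivization.rep_nonzero P.1
  by_cases h1 : P.1.rep 1 = 0
  · rw [h1, mul_zero, add_zero] at hzero
    apply hrepne
    funext v
    fin_cases v
    · exact hzero
    · exact h1
  · apply ht
    refine ⟨P, hP, ?_⟩
    rw [hF]
    field_simp
    linear_combination -hzero

lemma exists_good_ty {Z : Set (PtQ k)} (hfin : Z.Finite) :
    ∃ t : k, ∀ P ∈ Z, evalPt P (Ly t) ≠ 0 := by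
  set F : PtQ k → k := fun P => -(P.2.rep 0) / (P.2.rep 1) with hF
  obtain ⟨t, ht⟩ := ((hfin.image F).infinite_compl).nonempty
  refine ⟨t, fun P hP hzero => ?_⟩
  rw [evalPt_Ly] at hzero
  have hrepne := Projectivization.rep_nonzero P.2
  by_cases h1 : P.2.rep 1 = 0
  · rw [h1, mul_zero, add_zero] at hzero
    apply hrepne
    funext v
    fin_cases v
    · exact hzero
    · exact h1
  · apply ht
    refine ⟨P, hP, ?_⟩
    rw [hF]
    field_simp
    linear_combination -hzero

end Stmt1Aux
namespace Stmt1Aux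
open MvPolynomial Module

variable {k : Type} [Field k]

lemma mono_bdd : ∀ (B : ℕ) (f : ℕ → ℕ), Monotone f → (∀ n, f n ≤ B) →
    ∃ N, ∀ m, N ≤ m → f m = f N := by
  intro B
  induction B with
  | zero =>
    intro f _ hb
    exact ⟨0, fun m _ => by have h1 := hb m; have h2 := hb 0; omega⟩
  | succ B ih =>
    intro f hm hb
    by_cases hex : ∃ n, f n = B + 1
    · obtain ⟨n, hn⟩ := hex
      refine ⟨n, fun m hnm => ?_⟩
      have h1 := hm hnm
      have h2 := hb m
      omega
    · push_neg at hex
      apply ih f hm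
      intro n
      have h1 := hb n
      have h2 := hex n
      omega

end Stmt1Aux

open Stmt1Aux MvPolynomial Module in
theorem stmt1' (k : Type) [Field k] [IsAlgClosed k]
    (I : Ideal (S2 k)) (hbih : IsBihom I) (hsat : IsSat I) (hne : I ≠ ⊤)
    (hfin : (biZeroLocus I).Finite) :
    (∀ i j : ℤ, ΔH I i j ≤ 1) ∧
    ∃ N : ℤ, ∀ i j : ℤ, (N ≤ i ∨ N ≤ j) → ΔH I i j = 0 := by
  classical
  obtain ⟨t, htx⟩ := exists_good_tx hfin
  obtain ⟨t', hty⟩ := exists_good_ty hfin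
  set L : S2 k := Lx t
  set L' : S2 k := Ly t'
  have hL : IsWeightedHomogeneous bw L ((1 : ℕ), (0 : ℕ)) := Lx_homog t
  have hL' : IsWeightedHomogeneous bw L' ((0 : ℕ), (1 : ℕ)) := Ly_homog t'
  have hL0 : L ≠ 0 := Lx_ne_zero t
  have hL'0 : L' ≠ 0 := Ly_ne_zero t'
  have hLp : Prime L := prime_Lx t
  have hnd : ¬ L ∣ L' := Lx_not_dvd_Ly t t'
  have hnzdL : ∀ h : S2 k, L * h ∈ I → h ∈ I :=
    nzd_of_nonvanishing I hbih hsat hL htx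
  have hnzdL' : ∀ h : S2 k, L' * h ∈ I → h ∈ I :=
    nzd_of_nonvanishing I hbih hsat hL' hty
  -- basic step bounds
  have monox : ∀ i j : ℕ, hilb I i j ≤ hilb I (i+1) j := by
    intro i j
    have h := hilb_le I L hL i j hnzdL
    rwa [Nat.add_comm 1 i, Nat.zero_add] at h
  have monoy : ∀ i j : ℕ, hilb I i j ≤ hilb I i (j+1) := by
    intro i j
    have h := hilb_le I L' hL' i j hnzdL'
    rwa [Nat.add_comm 1 j, Nat.zero_add] at h
  have monox_le : ∀ (j i i' : ℕ), i ≤ i' → hilb I i j ≤ hilb I i' j := by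
    intro j i i' h
    induction h with
    | refl => exact le_rfl
    | step h ih => exact le_trans ih (monox _ j)
  have monoy_le : ∀ (i j j' : ℕ), j ≤ j' → hilb I i j ≤ hilb I i j' := by
    intro i j j' h
    induction h with
    | refl => exact le_rfl
    | step h ih => exact le_trans ih (monoy i _)
  -- HM facts
  have hmz : ∀ (x y : ℤ), x < 0 ∨ y < 0 → HM I x y = 0 := by
    intro x y h
    simp only [HM]
    rw [if_neg (by omega)]
  have hHM : ∀ (x y : ℕ), HM I ((x : ℕ) : ℤ) ((y : ℕ) : ℤ) = hilb I x y := by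
    intro x y
    simp only [HM]
    rw [if_pos ⟨Int.natCast_nonneg x, Int.natCast_nonneg y⟩]
    simp
  constructor
  · -- PART 1
    have main_step : ∀ a b : ℕ,
        (hilb I (a+1) (b+1) : ℤ) - hilb I a (b+1) - hilb I (a+1) b + hilb I a b ≤ 1 := by
      intro a b
      have hsup := dimI_superadd I L L' hL hL' hL0 hL'0 hLp hnd hnzdL a b
      rw [Nat.add_comm 1 a, Nat.add_comm 1 b] at hsup
      have e1 := hilb_cast I (a+1) (b+1)
      have e2 := hilb_cast I a (b+1)
      have e3 := hilb_cast I (a+1) b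
      have e4 := hilb_cast I a b
      rw [pc_finrank (a+1) (b+1)] at e1
      rw [pc_finrank a (b+1)] at e2
      rw [pc_finrank (a+1) b] at e3
      rw [pc_finrank a b] at e4
      have key : (((a:ℤ)+1+1))*(((b:ℤ)+1+1)) - ((a:ℤ)+1)*(((b:ℤ)+1+1))
          - (((a:ℤ)+1+1))*((b:ℤ)+1) + ((a:ℤ)+1)*((b:ℤ)+1) = 1 := by ring
      push_cast at e1 e2 e3 e4 hsup
      linarith
    have hXhom : IsWeightedHomogeneous bw (X (Sum.inl 0) : S2 k) ((1 : ℕ), (0 : ℕ)) :=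
      isWeightedHomogeneous_X k bw (Sum.inl 0)
    have hYhom : IsWeightedHomogeneous bw (X (Sum.inr 0) : S2 k) ((0 : ℕ), (1 : ℕ)) :=
      isWeightedHomogeneous_X k bw (Sum.inr 0)
    have edge_x : ∀ a : ℕ, (hilb I (a+1) 0 : ℤ) - hilb I a 0 ≤ 1 := by
      intro a
      have hmono := dimI_mono I hXhom (X_ne_zero _) (by omega : 1 + a = a + 1)
        (by omega : 0 + 0 = 0)
      have e1 := hilb_cast I (a+1) 0
      have e2 := hilb_cast I a 0
      rw [pc_finrank (a+1) 0] at e1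
      rw [pc_finrank a 0] at e2
      push_cast at e1 e2
      have key : (((a:ℤ)+1+1))*((0:ℤ)+1) - ((a:ℤ)+1)*((0:ℤ)+1) = 1 := by ring
      push_cast at hmono
      linarith
    have edge_y : ∀ b : ℕ, (hilb I 0 (b+1) : ℤ) - hilb I 0 b ≤ 1 := by
      intro b
      have hmono := dimI_mono I hYhom (X_ne_zero _) (by omega : 0 + 0 = 0)
        (by omega : 1 + b = b + 1)
      have e1 := hilb_cast I 0 (b+1)
      have e2 := hilb_cast I 0 b
      rw [pc_finrank 0 (b+1)] at e1
      rw [pc_finrank 0 b] at e2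
      push_cast at e1 e2
      have key : ((0:ℤ)+1)*(((b:ℤ)+1+1)) - ((0:ℤ)+1)*((b:ℤ)+1) = 1 := by ring
      push_cast at hmono
      linarith
    have h00 : (hilb I 0 0 : ℤ) ≤ 1 := by
      have e1 := hilb_cast I 0 0
      rw [pc_finrank 0 0] at e1
      push_cast at e1
      have : (0 : ℤ) ≤ (finrank k (Ipiece I ((0:ℕ), (0:ℕ))) : ℤ) := Int.natCast_nonneg _
      linarith
    intro i j
    by_cases hi : 0 ≤ i
    · by_cases hj : 0 ≤ j
      · lift i to ℕ using hi with a
        lift j to ℕ using hj with b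
        simp only [ΔH]
        rcases Nat.eq_zero_or_pos a with rfl | hapos
        · rcases Nat.eq_zero_or_pos b with rfl | hbpos
          · have z1 := hHM 0 0
            have z2 : HM I (((0:ℕ):ℤ) - 1) ((0:ℕ):ℤ) = 0 := hmz _ _ (by omega)
            have z3 : HM I ((0:ℕ):ℤ) (((0:ℕ):ℤ) - 1) = 0 := hmz _ _ (by omega)
            have z4 : HM I (((0:ℕ):ℤ) - 1) (((0:ℕ):ℤ) - 1) = 0 := hmz _ _ (by omega)
            rw [z2, z3, z4, z1]
            linarith
          · obtain ⟨b', rfl⟩ : ∃ b', b = b' + 1 := ⟨b - 1, by omega⟩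
            have hargb : ((b'+1 : ℕ) : ℤ) - 1 = ((b' : ℕ) : ℤ) := by push_cast; ring
            rw [hargb]
            have z1 := hHM 0 (b'+1)
            have z2 := hHM 0 b'
            have z3 : HM I (((0:ℕ):ℤ) - 1) ((b'+1 : ℕ) : ℤ) = 0 := hmz _ _ (by omega)
            have z4 : HM I (((0:ℕ):ℤ) - 1) ((b' : ℕ) : ℤ) = 0 := hmz _ _ (by omega)
            rw [z1, z2, z3, z4]
            have := edge_y b'
            linarith
        · obtain ⟨a', rfl⟩ : ∃ a', a = a' + 1 := ⟨a - 1, by omega⟩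
          have harga : ((a'+1 : ℕ) : ℤ) - 1 = ((a' : ℕ) : ℤ) := by push_cast; ring
          rcases Nat.eq_zero_or_pos b with rfl | hbpos
          · rw [harga]
            have z1 := hHM (a'+1) 0
            have z2 := hHM a' 0
            have z3 : HM I ((a'+1 : ℕ) : ℤ) (((0:ℕ):ℤ) - 1) = 0 := hmz _ _ (by omega)
            have z4 : HM I ((a' : ℕ) : ℤ) (((0:ℕ):ℤ) - 1) = 0 := hmz _ _ (by omega)
            rw [z1, z2, z3, z4]
            have := edge_x a'
            linarith
          · obtain ⟨b', rfl⟩ : ∃ b', b = b' + 1 := ⟨b - 1, by omega⟩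
            have hargb : ((b'+1 : ℕ) : ℤ) - 1 = ((b' : ℕ) : ℤ) := by push_cast; ring
            rw [harga, hargb, hHM (a'+1) (b'+1), hHM a' (b'+1), hHM (a'+1) b', hHM a' b']
            exact main_step a' b'
      · push_neg at hj
        simp only [ΔH]
        rw [hmz _ _ (by omega), hmz _ _ (by omega), hmz _ _ (by omega), hmz _ _ (by omega)]
        norm_num
    · push_neg at hi
      simp only [ΔH]
      rw [hmz _ _ (by omega), hmz _ _ (by omega), hmz _ _ (by omega), hmz _ _ (by omega)]
      norm_num
  · -- PART 2
    obtain ⟨E1, hE1⟩ := exists_quadrant I hbih hL htx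
    obtain ⟨E2, hE2⟩ := exists_quadrant I hbih hL' hty
    set E := max E1 E2 + 1 with hE
    have stepx : ∀ i j : ℕ, E ≤ i → E ≤ j → hilb I (i+1) j = hilb I i j := by
      intro i j hi hj
      have h := hilb_eq I L hbih hL i j hnzdL
        (fun f hf => hE1 (1+i) (0+j) (by omega) (by omega) f hf)
      rwa [Nat.add_comm 1 i, Nat.zero_add] at h
    have stepy : ∀ i j : ℕ, E ≤ i → E ≤ j → hilb I i (j+1) = hilb I i j := by
      intro i j hi hj
      have h := hilb_eq I L' hbih hL' i j hnzdL'
        (fun f hf => hE2 (0+i) (1+j) (by omega) (by omega) f hf)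
      rwa [Nat.add_comm 1 j, Nat.zero_add] at h
    have hrowE : ∀ j, E ≤ j → ∀ i, E ≤ i → hilb I i j = hilb I E j := by
      intro j hj i hi
      induction hi with
      | refl => rfl
      | step h ih => rw [stepx _ j h hj]; exact ih
    have hcolE : ∀ j, E ≤ j → hilb I E j = hilb I E E := by
      intro j hj
      induction hj with
      | refl => rfl
      | step h ih => rw [stepy E _ le_rfl h]; exact ih
    have hconst : ∀ i j, E ≤ i → E ≤ j → hilb I i j = hilb I E E :=
      fun i j hi hj => (hrowE j hj i hi).trans (hcolE j hj)
    set C := hilb I E E with hC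
    have hbd : ∀ i j, hilb I i j ≤ C := by
      intro i j
      calc hilb I i j ≤ hilb I (max i E) j := monox_le j i _ (le_max_left _ _)
        _ ≤ hilb I (max i E) (max j E) := monoy_le _ j _ (le_max_left _ _)
        _ = C := hconst _ _ (le_max_right _ _) (le_max_right _ _)
    have hrowstab : ∀ j, ∃ N, ∀ m, N ≤ m → hilb I m j = hilb I N j := by
      intro j
      exact mono_bdd C (fun i => hilb I i j)
        (monotone_nat_of_le_succ (fun n => monox n j)) (fun n => hbd n j)
    have hcolstab : ∀ i, ∃ N, ∀ m, N ≤ m → hilb I i m = hilb I i N := by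
      intro i
      exact mono_bdd C (fun j => hilb I i j)
        (monotone_nat_of_le_succ (fun n => monoy i n)) (fun n => hbd i n)
    choose Nrow hNrow using hrowstab
    choose Ncol hNcol using hcolstab
    set M : ℕ := ((Finset.range (E+1)).sup Nrow) + E + 1 with hM
    set M' : ℕ := ((Finset.range (E+1)).sup Ncol) + E + 1 with hM'
    have diffx : ∀ i j : ℕ, M ≤ i → hilb I (i+1) j = hilb I i j := by
      intro i j hi
      by_cases hj : E ≤ j
      · exact stepx i j (by omega) hj
      · have hNle : Nrow j ≤ (Finset.range (E+1)).sup Nrow :=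
          Finset.le_sup (Finset.mem_range.mpr (by omega))
        rw [hNrow j (i+1) (by omega), hNrow j i (by omega)]
    have diffy : ∀ i j : ℕ, M' ≤ j → hilb I i (j+1) = hilb I i j := by
      intro i j hj
      by_cases hi : E ≤ i
      · exact stepy i j hi (by omega)
      · have hNle : Ncol i ≤ (Finset.range (E+1)).sup Ncol :=
          Finset.le_sup (Finset.mem_range.mpr (by omega))
        rw [hNcol i (j+1) (by omega), hNcol i j (by omega)]
    refine ⟨((max M M' + 2 : ℕ) : ℤ), ?_⟩
    have hdx : ∀ (x y : ℤ), ((max M M' + 2 : ℕ) : ℤ) - 1 ≤ x → HM I x y - HM I (x-1) y = 0 := by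
      intro x y hx
      by_cases hy : 0 ≤ y
      · lift y to ℕ using hy with b
        have hx0 : 0 ≤ x - 1 := by omega
        set a := (x-1).toNat with ha
        have ha' : ((a : ℕ) : ℤ) = x - 1 := Int.toNat_of_nonneg hx0
        have hxa : x = ((a+1 : ℕ) : ℤ) := by push_cast; omega
        rw [hxa]
        have h1 : ((a+1 : ℕ) : ℤ) - 1 = ((a : ℕ) : ℤ) := by push_cast; ring
        rw [h1, hHM (a+1) b, hHM a b]
        have hMa : M ≤ a := by omega
        rw [diffx a b hMa]
        ring
      · rw [hmz _ _ (by omega), hmz _ _ (by omega)]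
        ring
    have hdy : ∀ (x y : ℤ), ((max M M' + 2 : ℕ) : ℤ) - 1 ≤ y → HM I x y - HM I x (y-1) = 0 := by
      intro x y hy
      by_cases hx : 0 ≤ x
      · lift x to ℕ using hx with a
        have hy0 : 0 ≤ y - 1 := by omega
        set b := (y-1).toNat with hb
        have hb' : ((b : ℕ) : ℤ) = y - 1 := Int.toNat_of_nonneg hy0
        have hyb : y = ((b+1 : ℕ) : ℤ) := by push_cast; omega
        rw [hyb]
        have h1 : ((b+1 : ℕ) : ℤ) - 1 = ((b : ℕ) : ℤ) := by push_cast; ring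
        rw [h1, hHM a (b+1), hHM a b]
        have hMb : M' ≤ b := by omega
        rw [diffy a b hMb]
        ring
      · rw [hmz _ _ (by omega), hmz _ _ (by omega)]
        ring
    intro i j hij
    rcases hij with hij | hij
    · have d1 := hdx i j (by omega)
      have d2 := hdx i (j-1) (by omega)
      simp only [ΔH]
      linarith
    · have d1 := hdy i j (by omega)
      have d2 := hdy (i-1) j (by omega)
      simp only [ΔH]
      linarith

/-- c_{ij} ≤ 1 everywhere and c_{ij} = 0 for i ≫ 0 or j ≫ 0. -/
theorem stmt1 (k : Type) [Field k] [IsAlgClosed k]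
    (I : Ideal (S2 k)) (hbih : IsBihom I) (hsat : IsSat I) (hne : I ≠ ⊤)
    (hfin : (biZeroLocus I).Finite) :
    (∀ i j : ℤ, ΔH I i j ≤ 1) ∧
    ∃ N : ℤ, ∀ i j : ℤ, (N ≤ i ∨ N ≤ j) → ΔH I i j = 0 :=
  stmt1' k I hbih hsat hne hfin
end

section
/- Let X be a zero-dimensional subscheme of P^1 × P^1, P ∈ X a point with multiplicity m_X(P) = 1, and Z = X \ {P}. Then (r,s) is the unique minimal separating degree for P in X if and only if the Hilbert functions satisfy: H_Z(i,j) = H_X(i,j) whenever (i,j) is not ≥ (r,s) componentwise, and H_Z(i,j) = H_X(i,j) − 1 whenever i ≥ r and j ≥ s. -/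
/- Common setup: the bigraded coordinate ring of Q = P^1 x P^1, bigraded Hilbert
functions, point ideals, separators, minimal free resolutions, staircase (Ferrers)
configurations of reduced ACM schemes. -/

open MvPolynomial

attribute [local instance] Classical.propDecidable

/-! Auxiliary lemmas for stmt5 -/

noncomputable section StmtFiveAux

variable {k : Type} [Field k]

namespace Stmt5Aux

/-- coordinate-sum hom. -/
def addCoords : ℕ × ℕ →+ ℕ where
  toFun p := p.1 + p.2
  map_zero' := rfl
  map_add' p q := by simp [Nat.add_add_add_comm]

lemma weight_one_eq (m : BiVar →₀ ℕ) :
    Finsupp.weight (fun _ : BiVar => (1:ℕ)) m = addCoords (Finsupp.weight bw m) := by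
  rw [Finsupp.weight_apply, Finsupp.weight_apply, map_finsuppSum]
  refine Finsupp.sum_congr fun v _ => ?_
  rw [map_nsmul]
  rcases v with v | v <;> simp [bw, addCoords]

lemma whs_fd (d : ℕ × ℕ) : FiniteDimensional k (weightedHomogeneousSubmodule k bw d) := by
  have hfin : {m : BiVar →₀ ℕ | Finsupp.weight bw m = d}.Finite := by
    apply (Finsupp.finite_of_nat_weight_le (fun _ : BiVar => 1) (by simp) (d.1 + d.2)).subset
    intro m hm
    simp only [Set.mem_setOf_eq] at hm ⊢
    rw [weight_one_eq, hm]; exact le_of_eq rfl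
  rw [weightedHomogeneousSubmodule_eq_finsupp_supported]
  haveI := hfin.to_subtype
  exact Module.Finite.of_basis (basisRestrictSupport k _)

/-- evaluation at a point as a k-linear map. -/
def evalL (x : PtQ k) : S2 k →ₗ[k] k where
  toFun := evalPt x
  map_add' f g := map_add _ f g
  map_smul' c f := by simp [evalPt, MvPolynomial.smul_eval]

@[simp] lemma evalL_apply (x : PtQ k) (f : S2 k) : evalL x f = evalPt x f := rfl

/-- Membership in the point ideal forces vanishing. -/
lemma eval_eq_zero_of_mem_pointIdeal {x : PtQ k} {f : S2 k} (hf : f ∈ pointIdeal x) :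
    evalPt x f = 0 := by
  have : pointIdeal x ≤ RingHom.ker (evalPt x) := by
    rw [pointIdeal, Ideal.span_le]
    rintro g ⟨-, hg⟩
    exact hg
  exact this hf

/-- Degreewise description of the ideal of the union. -/
lemma Ipiece_inf (IZ : Ideal (S2 k)) (x : PtQ k) (d : ℕ × ℕ) :
    Ipiece (IZ ⊓ pointIdeal x) d =
      (LinearMap.ker ((evalL x).comp (Ipiece IZ d).subtype)).map (Ipiece IZ d).subtype := by
  ext f
  simp only [Submodule.mem_map, LinearMap.mem_ker, LinearMap.comp_apply, evalL_apply,
    Submodule.coe_subtype]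
  constructor
  · rintro hf
    obtain ⟨⟨hfI, hfx⟩, hfh⟩ :
        (f ∈ IZ ∧ f ∈ pointIdeal x) ∧ f ∈ weightedHomogeneousSubmodule k bw d := hf
    exact ⟨⟨f, ⟨hfI, hfh⟩⟩, eval_eq_zero_of_mem_pointIdeal hfx, rfl⟩
  · rintro ⟨⟨g, hg⟩, hgx, rfl⟩
    obtain ⟨hgI, hgh⟩ : g ∈ IZ ∧ g ∈ weightedHomogeneousSubmodule k bw d := hg
    refine ⟨⟨hgI, ?_⟩, hgh⟩
    exact Ideal.subset_span ⟨⟨d, hgh⟩, hgx⟩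

lemma Ipiece_le (I : Ideal (S2 k)) (d : ℕ × ℕ) :
    Ipiece I d ≤ weightedHomogeneousSubmodule k bw d := inf_le_right

lemma Ipiece_fd (I : Ideal (S2 k)) (d : ℕ × ℕ) : FiniteDimensional k (Ipiece I d) := by
  haveI := whs_fd (k := k) d
  exact Submodule.finiteDimensional_of_le (Ipiece_le I d)

lemma mem_sepDegs (IZ : Ideal (S2 k)) (x : PtQ k) (d : ℕ × ℕ) :
    d ∈ SepDegs IZ x ↔ ∃ f ∈ Ipiece IZ d, evalPt x f ≠ 0 := by
  constructor
  · rintro ⟨f, hfh, hfI, hfx⟩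
    exact ⟨f, ⟨hfI, (mem_weightedHomogeneousSubmodule _ _ _ _).2 hfh⟩, hfx⟩
  · rintro ⟨f, ⟨hfI, hfh⟩, hfx⟩
    exact ⟨f, (mem_weightedHomogeneousSubmodule _ _ _ _).1 hfh, hfI, hfx⟩

/-- Key dimension count. -/
lemma hilb_inf (IZ : Ideal (S2 k)) (x : PtQ k) (i j : ℕ) :
    (hilb (IZ ⊓ pointIdeal x) i j : ℤ) =
      (hilb IZ i j : ℤ) + (if ((i, j) : ℕ × ℕ) ∈ SepDegs IZ x then 1 else 0) := by
  haveI := whs_fd (k := k) ((i, j) : ℕ × ℕ)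
  haveI := Ipiece_fd IZ ((i, j) : ℕ × ℕ)
  have hmap : Ipiece (IZ ⊓ pointIdeal x) ((i, j) : ℕ × ℕ) =
      (LinearMap.ker ((evalL x).comp (Ipiece IZ ((i, j) : ℕ × ℕ)).subtype)).map
        (Ipiece IZ ((i, j) : ℕ × ℕ)).subtype :=
    Ipiece_inf IZ x (i, j)
  have hWV : Module.finrank k (Ipiece IZ ((i, j) : ℕ × ℕ)) ≤
      Module.finrank k (weightedHomogeneousSubmodule k bw ((i, j) : ℕ × ℕ)) :=
    Submodule.finrank_mono (Ipiece_le IZ (i, j))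
  by_cases hsep : ((i, j) : ℕ × ℕ) ∈ SepDegs IZ x
  · obtain ⟨f, hfW, hfx⟩ := (mem_sepDegs IZ x (i, j)).1 hsep
    have hrange : LinearMap.range ((evalL x).comp (Ipiece IZ ((i, j) : ℕ × ℕ)).subtype) = ⊤ := by
      rcases Ideal.eq_bot_or_top
        (LinearMap.range ((evalL x).comp (Ipiece IZ ((i, j) : ℕ × ℕ)).subtype)) with h | h
      · exfalso
        apply hfx
        have hmem := LinearMap.mem_range_self
          ((evalL x).comp (Ipiece IZ ((i, j) : ℕ × ℕ)).subtype) ⟨f, hfW⟩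
        rw [h] at hmem
        exact (Submodule.mem_bot k).1 hmem
      · exact h
    have hrank := LinearMap.finrank_range_add_finrank_ker
      ((evalL x).comp (Ipiece IZ ((i, j) : ℕ × ℕ)).subtype)
    rw [hrange, finrank_top, Module.finrank_self] at hrank
    have hker : Module.finrank k (Ipiece (IZ ⊓ pointIdeal x) ((i, j) : ℕ × ℕ)) =
        Module.finrank k
          (LinearMap.ker ((evalL x).comp (Ipiece IZ ((i, j) : ℕ × ℕ)).subtype)) := by
      rw [hmap, Submodule.finrank_map_subtype_eq]
    simp only [hilb, if_pos hsep]
    rw [hker]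
    omega
  · have hkert : LinearMap.ker ((evalL x).comp (Ipiece IZ ((i, j) : ℕ × ℕ)).subtype) = ⊤ := by
      rw [LinearMap.ker_eq_top]
      ext g
      rcases g with ⟨g, hg⟩
      by_contra hne
      exact hsep ((mem_sepDegs IZ x (i, j)).2 ⟨g, hg, hne⟩)
    have heq : Ipiece (IZ ⊓ pointIdeal x) ((i, j) : ℕ × ℕ) = Ipiece IZ ((i, j) : ℕ × ℕ) := by
      rw [hmap, hkert, Submodule.map_subtype_top]
    simp only [hilb, if_neg hsep, add_zero]
    rw [heq]

lemma pivot_spec (v : Fin 2 → k) (hv : v ≠ 0) : v (pivot v) ≠ 0 := by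
  unfold pivot
  split_ifs with h
  · exact h
  · push_neg at h
    intro h1
    apply hv
    funext u
    fin_cases u <;> simp [h, h1]

lemma sep_succ_left {IZ : Ideal (S2 k)} {x : PtQ k} {d : ℕ × ℕ} (hd : d ∈ SepDegs IZ x) :
    ((d.1 + 1, d.2) : ℕ × ℕ) ∈ SepDegs IZ x := by
  obtain ⟨f, hfh, hfI, hfx⟩ := hd
  refine ⟨f * X (Sum.inl (pivot x.1.rep)), ?_, Ideal.mul_mem_right _ _ hfI, ?_⟩
  · have h := hfh.mul (isWeightedHomogeneous_X k bw (Sum.inl (pivot x.1.rep)))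
    have : d + bw (Sum.inl (pivot x.1.rep)) = ((d.1 + 1, d.2) : ℕ × ℕ) := by
      simp [bw, Prod.ext_iff]
    rwa [this] at h
  · rw [map_mul]
    have : evalPt x (X (Sum.inl (pivot x.1.rep))) = x.1.rep (pivot x.1.rep) := by
      simp [evalPt]
    rw [this]
    exact mul_ne_zero hfx (pivot_spec x.1.rep (Projectivization.rep_nonzero x.1))

lemma sep_succ_right {IZ : Ideal (S2 k)} {x : PtQ k} {d : ℕ × ℕ} (hd : d ∈ SepDegs IZ x) :
    ((d.1, d.2 + 1) : ℕ × ℕ) ∈ SepDegs IZ x := by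
  obtain ⟨f, hfh, hfI, hfx⟩ := hd
  refine ⟨f * X (Sum.inr (pivot x.2.rep)), ?_, Ideal.mul_mem_right _ _ hfI, ?_⟩
  · have h := hfh.mul (isWeightedHomogeneous_X k bw (Sum.inr (pivot x.2.rep)))
    have : d + bw (Sum.inr (pivot x.2.rep)) = ((d.1, d.2 + 1) : ℕ × ℕ) := by
      simp [bw, Prod.ext_iff]
    rwa [this] at h
  · rw [map_mul]
    have : evalPt x (X (Sum.inr (pivot x.2.rep))) = x.2.rep (pivot x.2.rep) := by
      simp [evalPt]
    rw [this]
    exact mul_ne_zero hfx (pivot_spec x.2.rep (Projectivization.rep_nonzero x.2))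

lemma sep_mono {IZ : Ideal (S2 k)} {x : PtQ k} {d e : ℕ × ℕ}
    (hd : d ∈ SepDegs IZ x) (h : d ≤ e) : e ∈ SepDegs IZ x := by
  obtain ⟨h1, h2⟩ := h
  have key : ∀ a b : ℕ, ((d.1 + a, d.2 + b) : ℕ × ℕ) ∈ SepDegs IZ x := by
    intro a
    induction a with
    | zero =>
      intro b
      induction b with
      | zero => simpa using hd
      | succ b ihb => exact sep_succ_right ihb
    | succ a iha =>
      intro b
      have := sep_succ_left (iha b)
      exact this
  have : e = ((d.1 + (e.1 - d.1), d.2 + (e.2 - d.2)) : ℕ × ℕ) := by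
    ext <;> simp <;> omega
  rw [this]
  exact key _ _

end Stmt5Aux

/-- for P ∈ X with m_X(P) = 1 and Z = X \ {P}, (r,s) is the unique minimal
separating degree for P iff H_Z agrees with H_X off the shifted quadrant (r,s) + ℕ²
and equals H_X − 1 on it. -/
theorem stmt5 (k : Type) [Field k] [IsAlgClosed k]
    (IZ : Ideal (S2 k)) (hbih : IsBihom IZ) (hsat : IsSat IZ)
    (hfin : (biZeroLocus IZ).Finite) (x : PtQ k)
    (hx : ¬ IZ ≤ pointIdeal x)
    (I : Ideal (S2 k)) (hI : I = IZ ⊓ pointIdeal x)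
    (r s : ℕ) :
    UniqueMinSepDeg IZ x (r, s) ↔
      ∀ i j : ℕ,
        ((r ≤ i ∧ s ≤ j) → (hilb IZ i j : ℤ) = (hilb I i j : ℤ) - 1) ∧
        (¬ (r ≤ i ∧ s ≤ j) → hilb IZ i j = hilb I i j) := by
  subst hI
  have key := Stmt5Aux.hilb_inf IZ x
  constructor
  · rintro ⟨⟨hmem, hmin⟩, huniq⟩
    have claim : ∀ n : ℕ, ∀ d : ℕ × ℕ, d.1 + d.2 ≤ n → d ∈ SepDegs IZ x →
        ((r, s) : ℕ × ℕ) ≤ d := by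
      intro n
      induction n with
      | zero =>
        intro d hd hdS
        by_cases hm : ∀ e ∈ SepDegs IZ x, ¬ e < d
        · exact le_of_eq (huniq d ⟨hdS, hm⟩).symm
        · push_neg at hm
          obtain ⟨e, heS, hlt⟩ := hm
          obtain ⟨hle, hne⟩ := lt_iff_le_and_ne.1 hlt
          have h1 : e.1 ≤ d.1 := hle.1
          have h2 : e.2 ≤ d.2 := hle.2
          exfalso
          have hx : e.1 ≠ d.1 ∨ e.2 ≠ d.2 := by
            by_contra hc
            push_neg at hc
            exact hne (Prod.ext hc.1 hc.2)
          rcases hx with hx | hx <;> omega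
      | succ n ih =>
        intro d hd hdS
        by_cases hm : ∀ e ∈ SepDegs IZ x, ¬ e < d
        · exact le_of_eq (huniq d ⟨hdS, hm⟩).symm
        · push_neg at hm
          obtain ⟨e, heS, hlt⟩ := hm
          obtain ⟨hle, hne⟩ := lt_iff_le_and_ne.1 hlt
          have h1 : e.1 ≤ d.1 := hle.1
          have h2 : e.2 ≤ d.2 := hle.2
          have hsum : e.1 + e.2 ≤ n := by
            have hx : e.1 ≠ d.1 ∨ e.2 ≠ d.2 := by
              by_contra hc
              push_neg at hc
              exact hne (Prod.ext hc.1 hc.2)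
            rcases hx with hx | hx <;> omega
          exact le_trans (ih e hsum heS) hle
    intro i j
    constructor
    · rintro ⟨hri, hsj⟩
      have hij : ((i, j) : ℕ × ℕ) ∈ SepDegs IZ x :=
        Stmt5Aux.sep_mono hmem ⟨hri, hsj⟩
      have h2 := key i j
      rw [if_pos hij] at h2
      omega
    · intro hneg
      have hij : ((i, j) : ℕ × ℕ) ∉ SepDegs IZ x := by
        intro hmem'
        exact hneg (claim (i + j) (i, j) le_rfl hmem')
      have h2 := key i j
      rw [if_neg hij] at h2
      exact_mod_cast h2.symm
  · intro H
    have hrs : ((r, s) : ℕ × ℕ) ∈ SepDegs IZ x := by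
      by_contra hno
      have h1 := (H r s).1 ⟨le_rfl, le_rfl⟩
      have h2 := key r s
      rw [if_neg hno] at h2
      omega
    have hnot : ∀ i j : ℕ, ¬ (r ≤ i ∧ s ≤ j) → ((i, j) : ℕ × ℕ) ∉ SepDegs IZ x := by
      intro i j hneg hmem'
      have h1 := (H i j).2 hneg
      have h2 := key i j
      rw [if_pos hmem'] at h2
      omega
    have hge : ∀ e ∈ SepDegs IZ x, ((r, s) : ℕ × ℕ) ≤ e := by
      intro e he
      by_contra hlt
      have hne : ¬ (r ≤ e.1 ∧ s ≤ e.2) := fun ⟨a, b⟩ => hlt ⟨a, b⟩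
      exact hnot e.1 e.2 hne (by simpa using he)
    refine ⟨⟨hrs, ?_⟩, ?_⟩
    · intro e he hlt
      exact absurd (le_antisymm (le_of_lt hlt) (hge e he)) (ne_of_lt hlt)
    · rintro e ⟨heS, hemin⟩
      rcases eq_or_lt_of_le (hge e heS) with h | h
      · exact h.symm
      · exact absurd h (hemin _ hrs)
end StmtFiveAux
end

section
/- Let X be a reduced ACM zero-dimensional subscheme of P^1 × P^1, with points P_{ij} = R_i ∩ C_j in a grid of (1,0)-lines R_0,…,R_a and (0,1)-lines C_0,…,C_b. Then c_{ij} = 1 if and only if P_{ij} ∈ X, where (c_{ij}) is the first difference of the Hilbert function of X. -/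
/- Common setup: the bigraded coordinate ring of Q = P^1 x P^1, bigraded Hilbert
functions, point ideals, separators, minimal free resolutions, staircase (Ferrers)
configurations of reduced ACM schemes. -/

open MvPolynomial

attribute [local instance] Classical.propDecidable

/-! ### Auxiliary machinery for stmt8 -/

noncomputable section AuxStmt8

open MvPolynomial

variable {k : Type} [Field k]

/-! #### Binary forms -/

def bcoef (n : ℕ) (p : MvPolynomial (Fin 2) k) (a : ℕ) : k :=
  coeff (Finsupp.single 0 a + Finsupp.single 1 (n - a)) p

lemma homog_deg_sum {n : ℕ} {p : MvPolynomial (Fin 2) k} (hp : p.IsHomogeneous n)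
    {m : Fin 2 →₀ ℕ} (hc : coeff m p ≠ 0) : m 0 + m 1 = n := by
  have h := hp hc
  rw [Finsupp.weight_apply, Finsupp.sum_fintype] at h
  · simpa [Fin.sum_univ_two] using h
  · intro i; simp

lemma eval_binary {n : ℕ} {p : MvPolynomial (Fin 2) k} (hp : p.IsHomogeneous n)
    (w : Fin 2 → k) :
    eval w p = ∑ a ∈ Finset.range (n+1), bcoef n p a * w 0 ^ a * w 1 ^ (n - a) := by
  classical
  have hsub : p.support ⊆ (Finset.range (n+1)).image
      (fun a => Finsupp.single 0 a + Finsupp.single 1 (n - a)) := by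
    intro m hm
    have hco : coeff m p ≠ 0 := mem_support_iff.mp hm
    have hdeg : m 0 + m 1 = n := homog_deg_sum hp hco
    refine Finset.mem_image.mpr ⟨m 0, Finset.mem_range.mpr (by omega), ?_⟩
    ext t
    fin_cases t <;> simp [Finsupp.single_apply] <;> omega
  rw [eval_eq']
  rw [Finset.sum_subset hsub]
  · rw [Finset.sum_image ?hinj]
    case hinj =>
      intro a ha b hb hab
      have := DFunLike.congr_fun hab (0 : Fin 2)
      simpa [Finsupp.single_apply] using this
    refine Finset.sum_congr rfl fun a _ => ?_
    simp [bcoef, Fin.prod_univ_two, Finsupp.single_apply, mul_assoc]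
  · intro m _ hm
    simp only [mem_support_iff, not_not] at hm
    simp [hm]

lemma binary_homog_zero {n : ℕ} {p : MvPolynomial (Fin 2) k} (hp : p.IsHomogeneous n)
    (v : Fin (n+1) → Fin 2 → k) (hv : ∀ s, v s ≠ 0)
    (hdet : ∀ s t, s ≠ t → v s 0 * v t 1 ≠ v s 1 * v t 0)
    (hz : ∀ s, eval (v s) p = 0) : p = 0 := by
  classical
  by_contra hp0
  set q : Polynomial k := ∑ a ∈ Finset.range (n+1), Polynomial.C (bcoef n p a) * Polynomial.X ^ a with hq
  have hqcoeff : ∀ a ∈ Finset.range (n+1), q.coeff a = bcoef n p a := by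
    intro a ha
    rw [hq, Polynomial.finset_sum_coeff]
    rw [Finset.sum_eq_single a]
    · simp
    · intro b _ hb
      simp [Polynomial.coeff_C_mul, Polynomial.coeff_X_pow, Ne.symm hb]
    · intro h; exact absurd ha h
  have hqcoeff' : ∀ a, n < a → q.coeff a = 0 := by
    intro a ha
    rw [hq, Polynomial.finset_sum_coeff]
    refine Finset.sum_eq_zero fun b hb => ?_
    have hba : b ≠ a := by have := Finset.mem_range.mp hb; omega
    simp [Polynomial.coeff_C_mul, Polynomial.coeff_X_pow]
    exact fun h => absurd h.symm hba
  have hqdeg : q.natDegree ≤ n := Polynomial.natDegree_le_iff_coeff_eq_zero.mpr hqcoeff'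
  have hq0 : q ≠ 0 := by
    intro h
    apply hp0
    ext m
    rw [coeff_zero]
    by_contra hc
    have hdeg : m 0 + m 1 = n := homog_deg_sum hp hc
    have hm : m = Finsupp.single 0 (m 0) + Finsupp.single 1 (n - (m 0)) := by
      ext t; fin_cases t <;> simp [Finsupp.single_apply] <;> omega
    have hb0 : bcoef n p (m 0) = 0 := by
      have := hqcoeff (m 0) (Finset.mem_range.mpr (by omega))
      rw [h] at this; simpa using this.symm
    rw [hm] at hc
    exact hc hb0
  have hqeval : ∀ t : k, q.eval t = ∑ a ∈ Finset.range (n+1), bcoef n p a * t ^ a := by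
    intro t; rw [hq]; simp [Polynomial.eval_finset_sum]
  have hroot : ∀ s, v s 1 ≠ 0 → q.eval (v s 0 / v s 1) = 0 := by
    intro s hs1
    have h1 : (v s 1) ^ n * q.eval (v s 0 / v s 1) = eval (v s) p := by
      rw [hqeval, eval_binary hp, Finset.mul_sum]
      refine Finset.sum_congr rfl fun a ha => ?_
      have han : a ≤ n := by have := Finset.mem_range.mp ha; omega
      rw [pow_sub₀ _ hs1 han, div_pow]
      field_simp
    have h2 := h1.trans (hz s)
    rcases mul_eq_zero.mp h2 with h | h
    · exact absurd (pow_eq_zero_iff'.mp h).1 hs1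
    · exact h
  have hinj : ∀ s t : Fin (n+1), s ≠ t → v s 1 ≠ 0 → v t 1 ≠ 0 →
      v s 0 / v s 1 ≠ v t 0 / v t 1 := by
    intro s t hst hs ht heq
    apply hdet s t hst
    field_simp at heq
    linear_combination heq
  by_cases hex : ∃ s0, v s0 1 = 0
  · obtain ⟨s0, hs0⟩ := hex
    have huniq : ∀ s, s ≠ s0 → v s 1 ≠ 0 := by
      intro s hs hvs
      exact hdet s s0 hs (by rw [hvs, hs0]; ring)
    have hvs00 : v s0 0 ≠ 0 := by
      intro h
      apply hv s0
      funext i; fin_cases i <;> simp [h, hs0]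
    have hcn : bcoef n p n = 0 := by
      have := hz s0
      rw [eval_binary hp] at this
      rw [Finset.sum_eq_single n] at this
      · simp at this
        rcases this with h | h
        · exact h
        · exact absurd h.1 hvs00
      · intro b hb hbn
        have : (0:k) ^ (n - b) = 0 := by
          apply zero_pow
          have := Finset.mem_range.mp hb; omega
        rw [hs0, this]; ring
      · intro h; exact absurd (Finset.mem_range.mpr (by omega)) h
    rcases Nat.eq_zero_or_pos n with hn | hn
    · apply hq0
      ext b
      rcases Nat.eq_zero_or_pos b with hb | hb
      · subst hb hn
        simpa using (hqcoeff 0 (by simp)).trans hcn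
      · simp [hqcoeff' b (by omega)]
    · have hqdeg' : q.natDegree ≤ n - 1 := by
        apply Polynomial.natDegree_le_iff_coeff_eq_zero.mpr
        intro m hm
        rcases Nat.lt_or_ge n m with h | h
        · exact hqcoeff' m h
        · have : m = n := by omega
          subst this
          rw [hqcoeff m (Finset.mem_range.mpr (by omega))]; exact hcn
      set T : Finset k := (Finset.univ.erase s0).image (fun s => v s 0 / v s 1) with hT
      have hTcard : T.card = n := by
        rw [hT, Finset.card_image_of_injOn, Finset.card_erase_of_mem (Finset.mem_univ _)]
        · simp
        · intro s hs t ht hst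
          by_contra hne
          exact hinj s t hne (huniq s (Finset.mem_erase.mp hs).1)
            (huniq t (Finset.mem_erase.mp ht).1) hst
      have hTsub : T ⊆ q.roots.toFinset := by
        intro x hx
        obtain ⟨s, hs, rfl⟩ := Finset.mem_image.mp hx
        rw [Multiset.mem_toFinset, Polynomial.mem_roots hq0]
        exact hroot s (huniq s (Finset.mem_erase.mp hs).1)
      have : n ≤ n - 1 := by
        calc n = T.card := hTcard.symm
        _ ≤ q.roots.toFinset.card := Finset.card_le_card hTsub
        _ ≤ Multiset.card q.roots := Multiset.toFinset_card_le _
        _ ≤ q.natDegree := Polynomial.card_roots' q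
        _ ≤ n - 1 := hqdeg'
      omega
  · push_neg at hex
    set T : Finset k := Finset.univ.image (fun s : Fin (n+1) => v s 0 / v s 1) with hT
    have hTcard : T.card = n + 1 := by
      rw [hT, Finset.card_image_of_injOn]
      · simp
      · intro s _ t _ hst
        by_contra hne
        exact hinj s t hne (hex s) (hex t) hst
    have hTsub : T ⊆ q.roots.toFinset := by
      intro x hx
      obtain ⟨s, hs, rfl⟩ := Finset.mem_image.mp hx
      rw [Multiset.mem_toFinset, Polynomial.mem_roots hq0]
      exact hroot s (hex s)
    have : n + 1 ≤ n := by
      calc n + 1 = T.card := hTcard.symm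
      _ ≤ q.roots.toFinset.card := Finset.card_le_card hTsub
      _ ≤ Multiset.card q.roots := Multiset.toFinset_card_le _
      _ ≤ q.natDegree := Polynomial.card_roots' q
      _ ≤ n := hqdeg
    omega

/-! #### Substitution (dehomogenization to one ruling) -/

def σX (c : Fin 2 → k) : BiVar → MvPolynomial (Fin 2) k :=
  Sum.elim (fun t => X t) (fun t => C (c t))

def σY (r : Fin 2 → k) : BiVar → MvPolynomial (Fin 2) k :=
  Sum.elim (fun t => C (r t)) (fun t => X t)

lemma eval_aeval_σX (w c : Fin 2 → k) (f : S2 k) :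
    eval w (aeval (σX c) f) = eval (Sum.elim w c) f := by
  induction f using MvPolynomial.induction_on with
  | C a => simp
  | add p q hp hq => simp only [map_add, hp, hq]
  | mul_X p l hp =>
    rw [map_mul, map_mul, map_mul, hp]
    congr 1
    cases l with
    | inl t => simp [σX]
    | inr t => simp [σX]

lemma eval_aeval_σY (w r : Fin 2 → k) (f : S2 k) :
    eval w (aeval (σY r) f) = eval (Sum.elim r w) f := by
  induction f using MvPolynomial.induction_on with
  | C a => simp
  | add p q hp hq => simp only [map_add, hp, hq]
  | mul_X p l hp =>
    rw [map_mul, map_mul, map_mul, hp]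
    congr 1
    cases l with
    | inl t => simp [σY]
    | inr t => simp [σY]

lemma weight_fst {m : BiVar →₀ ℕ} {i j : ℕ} (h : Finsupp.weight bw m = (i, j)) :
    ∑ t : Fin 2, m (Sum.inl t) = i := by
  rw [Finsupp.weight_apply, Finsupp.sum_fintype] at h
  · have h1 := congrArg Prod.fst h
    rw [Prod.fst_sum] at h1
    simpa [bw, Fintype.sum_sum_type] using h1
  · intro l; simp

lemma weight_snd {m : BiVar →₀ ℕ} {i j : ℕ} (h : Finsupp.weight bw m = (i, j)) :
    ∑ t : Fin 2, m (Sum.inr t) = j := by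
  rw [Finsupp.weight_apply, Finsupp.sum_fintype] at h
  · have h1 := congrArg Prod.snd h
    rw [Prod.snd_sum] at h1
    simpa [bw, Fintype.sum_sum_type] using h1
  · intro l; simp

lemma degree_univ {σ : Type} [Fintype σ] (e : σ →₀ ℕ) : e.degree = ∑ t : σ, e t :=
  Finset.sum_subset (Finset.subset_univ _)
    (fun t _ h => Finsupp.notMem_support_iff.mp h)

lemma isHomog_aeval_σX {f : S2 k} {i j : ℕ}
    (hf : IsWeightedHomogeneous bw f (i, j)) (c : Fin 2 → k) :
    (aeval (σX c) f).IsHomogeneous i := by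
  rw [← mem_homogeneousSubmodule]
  have hrw : aeval (σX c) f = ∑ m ∈ f.support, aeval (σX c) (monomial m (coeff m f)) := by
    rw [← map_sum, support_sum_monomial_coeff]
  rw [hrw]
  refine Submodule.sum_mem _ fun m hm => ?_
  have hw : Finsupp.weight bw m = (i, j) := hf (mem_support_iff.mp hm)
  rw [aeval_monomial, Finsupp.prod_fintype _ _ (fun l => pow_zero _), Fintype.prod_sum_type]
  set e : Fin 2 →₀ ℕ := Finsupp.equivFunOnFinite.symm fun t => m (Sum.inl t) with he
  have hprod : (∏ t : Fin 2, σX c (Sum.inl t) ^ m (Sum.inl t)) = monomial e 1 := by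
    rw [monomial_eq, Finsupp.prod_fintype _ _ (fun l => pow_zero _)]
    simp [σX, he]
  have hprod2 : (∏ t : Fin 2, σX c (Sum.inr t) ^ m (Sum.inr t))
      = C (∏ t : Fin 2, c t ^ m (Sum.inr t)) := by
    simp [σX]
  rw [hprod, hprod2]
  have hre : (algebraMap k (MvPolynomial (Fin 2) k)) (coeff m f) * (monomial e 1 *
      C (∏ t : Fin 2, c t ^ m (Sum.inr t)))
      = (coeff m f * ∏ t : Fin 2, c t ^ m (Sum.inr t)) • monomial e 1 := by
    rw [smul_eq_C_mul, algebraMap_eq, map_mul]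
    ring
  rw [hre]
  refine Submodule.smul_mem _ _ ?_
  rw [mem_homogeneousSubmodule]
  refine isHomogeneous_monomial 1 ?_
  rw [degree_univ]
  have hee : ∀ t, e t = m (Sum.inl t) := fun t => by simp [he]
  simp only [hee]
  exact weight_fst hw

lemma isHomog_aeval_σY {f : S2 k} {i j : ℕ}
    (hf : IsWeightedHomogeneous bw f (i, j)) (r : Fin 2 → k) :
    (aeval (σY r) f).IsHomogeneous j := by
  rw [← mem_homogeneousSubmodule]
  have hrw : aeval (σY r) f = ∑ m ∈ f.support, aeval (σY r) (monomial m (coeff m f)) := by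
    rw [← map_sum, support_sum_monomial_coeff]
  rw [hrw]
  refine Submodule.sum_mem _ fun m hm => ?_
  have hw : Finsupp.weight bw m = (i, j) := hf (mem_support_iff.mp hm)
  rw [aeval_monomial, Finsupp.prod_fintype _ _ (fun l => pow_zero _), Fintype.prod_sum_type]
  set e : Fin 2 →₀ ℕ := Finsupp.equivFunOnFinite.symm fun t => m (Sum.inr t) with he
  have hprod : (∏ t : Fin 2, σY r (Sum.inr t) ^ m (Sum.inr t)) = monomial e 1 := by
    rw [monomial_eq, Finsupp.prod_fintype _ _ (fun l => pow_zero _)]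
    simp [σY, he]
  have hprod2 : (∏ t : Fin 2, σY r (Sum.inl t) ^ m (Sum.inl t))
      = C (∏ t : Fin 2, r t ^ m (Sum.inl t)) := by
    simp [σY]
  rw [hprod, hprod2]
  have hre : (algebraMap k (MvPolynomial (Fin 2) k)) (coeff m f) *
      (C (∏ t : Fin 2, r t ^ m (Sum.inl t)) * monomial e 1)
      = (coeff m f * ∏ t : Fin 2, r t ^ m (Sum.inl t)) • monomial e 1 := by
    rw [smul_eq_C_mul, algebraMap_eq, map_mul]
    ring
  rw [hre]
  refine Submodule.smul_mem _ _ ?_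
  rw [mem_homogeneousSubmodule]
  refine isHomogeneous_monomial 1 ?_
  rw [degree_univ]
  have hee : ∀ t, e t = m (Sum.inr t) := fun t => by simp [he]
  simp only [hee]
  exact weight_snd hw

end AuxStmt8

noncomputable section AuxStmt8b

open MvPolynomial

variable {k : Type} [Field k]

/-! #### Lines and points of P¹ -/

lemma vec_cases {v : Fin 2 → k} (hv : v ≠ 0) : v 0 ≠ 0 ∨ v 1 ≠ 0 := by
  by_contra h
  push_neg at h
  exact hv (funext fun t => by fin_cases t <;> simp [h.1, h.2])

lemma rep_pivot_ne (P : P1 k) : P.rep (pivot P.rep) ≠ 0 := by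
  unfold pivot
  by_cases h : P.rep 0 ≠ 0
  · simpa [h] using h
  · push_neg at h
    rcases vec_cases (Projectivization.rep_nonzero P) with h0 | h1
    · exact absurd h h0
    · simpa [h] using h1

lemma prop_of_det {v w : Fin 2 → k} (hv : v ≠ 0) (hw : w ≠ 0)
    (h : w 1 * v 0 - w 0 * v 1 = 0) : ∃ a : k, a • w = v := by
  by_cases hw0 : w 0 ≠ 0
  · refine ⟨v 0 / w 0, funext fun t => ?_⟩
    fin_cases t
    · simp [div_mul_cancel₀, hw0]
    · show v 0 / w 0 * w 1 = v 1
      field_simp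
      linear_combination h
  · push_neg at hw0
    have hw1 : w 1 ≠ 0 := by
      rcases vec_cases hw with h0 | h1
      · exact absurd hw0 h0
      · exact h1
    have hv0 : v 0 = 0 := by
      have : w 1 * v 0 = 0 := by rw [hw0] at h; linear_combination h
      rcases mul_eq_zero.mp this with h' | h'
      · exact absurd h' hw1
      · exact h'
    refine ⟨v 1 / w 1, funext fun t => ?_⟩
    fin_cases t
    · show v 1 / w 1 * w 0 = v 0
      rw [hw0, hv0, mul_zero]
    · show v 1 / w 1 * w 1 = v 1
      field_simp

lemma det_eq_zero_iff (P Q : P1 k) :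
    Q.rep 1 * P.rep 0 - Q.rep 0 * P.rep 1 = 0 ↔ P = Q := by
  constructor
  · intro h
    obtain ⟨a, ha⟩ := prop_of_det (Projectivization.rep_nonzero P)
      (Projectivization.rep_nonzero Q) h
    rw [← P.mk_rep, ← Q.mk_rep]
    exact (Projectivization.mk_eq_mk_iff' k _ _ _ _).mpr ⟨a, ha⟩
  · rintro rfl; ring

def linX (Q : P1 k) : S2 k :=
  C (Q.rep 1) * X (Sum.inl 0) - C (Q.rep 0) * X (Sum.inl 1)

def linY (Q : P1 k) : S2 k :=
  C (Q.rep 1) * X (Sum.inr 0) - C (Q.rep 0) * X (Sum.inr 1)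

lemma CX_homog (a : k) (l : BiVar) : IsWeightedHomogeneous bw (C a * X l) (bw l) := by
  rw [← smul_eq_C_mul]
  exact ((weightedHomogeneousSubmodule k bw (bw l)).smul_mem a
    (by rw [mem_weightedHomogeneousSubmodule]; exact isWeightedHomogeneous_X k bw l) :
      _ ∈ weightedHomogeneousSubmodule k bw (bw l))

lemma linX_homog (Q : P1 k) : IsWeightedHomogeneous bw (linX Q) ((1:ℕ), (0:ℕ)) := by
  have h0 : C (Q.rep 1) * X (Sum.inl 0) ∈ weightedHomogeneousSubmodule k bw ((1:ℕ), (0:ℕ)) :=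
    CX_homog (Q.rep 1) (Sum.inl 0)
  have h1 : C (Q.rep 0) * X (Sum.inl 1) ∈ weightedHomogeneousSubmodule k bw ((1:ℕ), (0:ℕ)) :=
    CX_homog (Q.rep 0) (Sum.inl 1)
  exact Submodule.sub_mem _ h0 h1

lemma linY_homog (Q : P1 k) : IsWeightedHomogeneous bw (linY Q) ((0:ℕ), (1:ℕ)) := by
  have h0 : C (Q.rep 1) * X (Sum.inr 0) ∈ weightedHomogeneousSubmodule k bw ((0:ℕ), (1:ℕ)) :=
    CX_homog (Q.rep 1) (Sum.inr 0)
  have h1 : C (Q.rep 0) * X (Sum.inr 1) ∈ weightedHomogeneousSubmodule k bw ((0:ℕ), (1:ℕ)) :=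
    CX_homog (Q.rep 0) (Sum.inr 1)
  exact Submodule.sub_mem _ h0 h1

lemma Xpow_homog_l (s : Fin 2) (n : ℕ) :
    IsWeightedHomogeneous bw ((X (Sum.inl s) : S2 k) ^ n) ((n:ℕ), (0:ℕ)) := by
  rw [X_pow_eq_monomial]
  refine isWeightedHomogeneous_monomial bw _ _ ?_
  rw [Finsupp.weight_apply, Finsupp.sum_single_index] <;> simp [bw, Prod.smul_mk]

lemma Xpow_homog_r (s : Fin 2) (n : ℕ) :
    IsWeightedHomogeneous bw ((X (Sum.inr s) : S2 k) ^ n) ((0:ℕ), (n:ℕ)) := by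
  rw [X_pow_eq_monomial]
  refine isWeightedHomogeneous_monomial bw _ _ ?_
  rw [Finsupp.weight_apply, Finsupp.sum_single_index] <;> simp [bw, Prod.smul_mk]

lemma prod_linX_homog (R : ℕ → P1 k) (u : ℕ) :
    IsWeightedHomogeneous bw (∏ t ∈ Finset.range u, linX (R t)) ((u:ℕ), (0:ℕ)) := by
  induction u with
  | zero =>
    rw [Finset.range_zero, Finset.prod_empty]
    exact isWeightedHomogeneous_one k bw
  | succ u ih =>
    rw [Finset.prod_range_succ]
    exact ih.mul (linX_homog (R u))

lemma prod_linY_homog (Cc : ℕ → P1 k) (v : ℕ) :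
    IsWeightedHomogeneous bw (∏ t ∈ Finset.range v, linY (Cc t)) ((0:ℕ), (v:ℕ)) := by
  induction v with
  | zero =>
    rw [Finset.range_zero, Finset.prod_empty]
    exact isWeightedHomogeneous_one k bw
  | succ v ih =>
    rw [Finset.prod_range_succ]
    exact ih.mul (linY_homog (Cc v))

lemma eval_linX (Q : P1 k) (r c : Fin 2 → k) :
    eval (Sum.elim r c) (linX Q) = Q.rep 1 * r 0 - Q.rep 0 * r 1 := by
  simp [linX]

lemma eval_linY (Q : P1 k) (r c : Fin 2 → k) :
    eval (Sum.elim r c) (linY Q) = Q.rep 1 * c 0 - Q.rep 0 * c 1 := by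
  simp [linY]

end AuxStmt8b

noncomputable section AuxStmt8c

open MvPolynomial

variable {k : Type} [Field k]

/-! #### The staircase: points, boxes, and the vanishing-extension lemma -/

def Pt (T : Staircase k) (p : ℕ × ℕ) : PtQ k := (T.R p.1, T.C p.2)

lemma evalPt_Pt (T : Staircase k) (p : ℕ × ℕ) (f : S2 k) :
    evalPt (Pt T p) f = eval (Sum.elim (T.R p.1).rep (T.C p.2).rep) f := rfl

def box (T : Staircase k) (i j : ℕ) : Finset (ℕ × ℕ) :=
  T.D.filter (fun p => p.1 ≤ i ∧ p.2 ≤ j)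

/-- A bihomogeneous form of degree `(i,j)` vanishing at all points of the box
`[0,i] × [0,j]` of the staircase vanishes at every point of the staircase. -/
lemma vanish_extend (T : Staircase k) (i j : ℕ) {f : S2 k}
    (hf : IsWeightedHomogeneous bw f (i, j))
    (h : ∀ p ∈ box T i j, evalPt (Pt T p) f = 0) :
    ∀ p ∈ T.D, evalPt (Pt T p) f = 0 := by
  have stage1 : ∀ p ∈ T.D, p.2 ≤ j → evalPt (Pt T p) f = 0 := by
    rintro ⟨u, v⟩ hp hv
    by_cases hu : u ≤ i
    · exact h _ (Finset.mem_filter.mpr ⟨hp, hu, hv⟩)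
    · push_neg at hu
      have hua : u ≤ T.a := (T.bound _ hp).1
      set c := (T.C v).rep with hc
      set pbin := aeval (σX c) f with hpbin
      have hhom : pbin.IsHomogeneous i := isHomog_aeval_σX hf c
      have hzero : pbin = 0 := by
        refine binary_homog_zero hhom (fun s : Fin (i+1) => (T.R s).rep)
          (fun s => Projectivization.rep_nonzero _) ?_ ?_
        · intro s t hst heq
          have hne : T.R (s : ℕ) ≠ T.R (t : ℕ) := by
            intro hRst
            exact hst (Fin.ext (T.hR s (by omega) t (by omega) hRst))
          apply hne
          rw [← det_eq_zero_iff (T.R (s : ℕ)) (T.R (t : ℕ))]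
          linear_combination heq
        · intro s
          have hsD : ((s : ℕ), v) ∈ T.D :=
            T.lower _ hp ((s : ℕ), v) (by simp; omega) le_rfl
          have := h _ (Finset.mem_filter.mpr ⟨hsD, by simp; omega, hv⟩)
          rw [evalPt_Pt] at this
          rw [hpbin, eval_aeval_σX]
          exact this
      rw [evalPt_Pt]
      have : eval (Sum.elim (T.R u).rep c) f = eval ((T.R u).rep) pbin := by
        rw [hpbin, eval_aeval_σX]
      rw [this, hzero, map_zero]
  rintro ⟨u, v⟩ hp
  by_cases hv : v ≤ j
  · exact stage1 _ hp hv
  · push_neg at hv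
    have hvb : v ≤ T.b := (T.bound _ hp).2
    set r := (T.R u).rep with hr
    set qbin := aeval (σY r) f with hqbin
    have hhom : qbin.IsHomogeneous j := isHomog_aeval_σY hf r
    have hzero : qbin = 0 := by
      refine binary_homog_zero hhom (fun s : Fin (j+1) => (T.C s).rep)
        (fun s => Projectivization.rep_nonzero _) ?_ ?_
      · intro s t hst heq
        have hne : T.C (s : ℕ) ≠ T.C (t : ℕ) := by
          intro hCst
          exact hst (Fin.ext (T.hC s (by omega) t (by omega) hCst))
        apply hne
        rw [← det_eq_zero_iff (T.C (s : ℕ)) (T.C (t : ℕ))]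
        linear_combination heq
      · intro s
        have hsD : (u, (s : ℕ)) ∈ T.D :=
          T.lower _ hp (u, (s : ℕ)) le_rfl (by simp; omega)
        have := stage1 _ hsD (by simp; omega)
        rw [evalPt_Pt] at this
        rw [hqbin, eval_aeval_σY]
        exact this
    rw [evalPt_Pt]
    have : eval (Sum.elim r (T.C v).rep) f = eval ((T.C v).rep) qbin := by
      rw [hqbin, eval_aeval_σY]
    rw [this, hzero, map_zero]

end AuxStmt8c

noncomputable section AuxStmt8d

open MvPolynomial

variable {k : Type} [Field k]

/-! #### Evaluation maps and the Hilbert function -/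

def evalL (x : PtQ k) : S2 k →ₗ[k] k where
  toFun := evalPt x
  map_add' f g := map_add _ f g
  map_smul' a f := by simp [evalPt, smul_eq_C_mul]

lemma evalL_apply (x : PtQ k) (f : S2 k) : evalL x f = evalPt x f := rfl

def ΦT (T : Staircase k) : S2 k →ₗ[k] (↥T.pts → k) :=
  LinearMap.pi fun x => evalL (x : PtQ k)

def ΨT (T : Staircase k) (i j : ℕ) : S2 k →ₗ[k] (↥(box T i j) → k) :=
  LinearMap.pi fun p => evalL (Pt T (p : ℕ × ℕ))

def Sd (k : Type) [Field k] (i j : ℕ) : Submodule k (S2 k) :=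
  weightedHomogeneousSubmodule k bw ((i, j) : ℕ × ℕ)

instance Sd_findim (i j : ℕ) : FiniteDimensional k (Sd k i j) := by
  apply Submodule.finiteDimensional_of_le (S₂ := restrictTotalDegree BiVar k (i + j))
  intro f hf
  rw [mem_restrictTotalDegree]
  apply Finset.sup_le
  intro m hm
  have hw : Finsupp.weight bw m = ((i, j) : ℕ × ℕ) := hf (mem_support_iff.mp hm)
  have h1 := weight_fst hw
  have h2 := weight_snd hw
  have hs : (m.sum fun _ e => e) = ∑ l : BiVar, m l := by
    rw [Finsupp.sum_fintype]
    intro _; rfl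
  have : (m.sum fun _ e => e) = i + j := by
    rw [hs, Fintype.sum_sum_type, h1, h2]
  exact le_of_eq this

lemma pointIdeal_eval_zero (x : PtQ k) {f : S2 k} (hf : f ∈ pointIdeal x) :
    evalPt x f = 0 := by
  have hle : pointIdeal x ≤ RingHom.ker (evalPt x) :=
    Ideal.span_le.mpr fun g hg => RingHom.mem_ker.mpr hg.2
  exact RingHom.mem_ker.mp (hle hf)

lemma mem_pointIdeal_of (x : PtQ k) {f : S2 k} (hd : ∃ d : ℕ × ℕ, IsWeightedHomogeneous bw f d)
    (h0 : evalPt x f = 0) : f ∈ pointIdeal x :=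
  Ideal.subset_span ⟨hd, h0⟩

lemma mem_idealOfFinset_iff (Z : Finset (PtQ k)) (f : S2 k) :
    f ∈ idealOfFinset Z ↔ ∀ x ∈ Z, f ∈ pointIdeal x := by
  simp [idealOfFinset, Ideal.mem_iInf]

lemma Ipiece_eq (T : Staircase k) (i j : ℕ) :
    Ipiece T.ideal ((i, j) : ℕ × ℕ) = LinearMap.ker (ΦT T) ⊓ Sd k i j := by
  ext f
  simp only [Ipiece, Submodule.mem_inf, Submodule.restrictScalars_mem, LinearMap.mem_ker]
  constructor
  · rintro ⟨hI, hh⟩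
    refine ⟨funext fun x => ?_, hh⟩
    have hx : f ∈ pointIdeal (x : PtQ k) :=
      (mem_idealOfFinset_iff T.pts f).mp hI _ x.2
    exact pointIdeal_eval_zero _ hx
  · rintro ⟨hker, hh⟩
    refine ⟨(mem_idealOfFinset_iff T.pts f).mpr fun x hx => ?_, hh⟩
    refine mem_pointIdeal_of x ⟨(i, j), hh⟩ ?_
    exact congrFun hker (⟨x, hx⟩ : ↥T.pts)

set_option synthInstance.maxHeartbeats 1000000 in
set_option maxHeartbeats 1000000 in
lemma hilb_eq_rank (T : Staircase k) (i j : ℕ) :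
    hilb T.ideal i j = Module.finrank k (LinearMap.range ((ΦT T).domRestrict (Sd k i j))) := by
  have hker : LinearMap.ker ((ΦT T).domRestrict (Sd k i j))
      = Submodule.comap (Sd k i j).subtype (Ipiece T.ideal ((i, j) : ℕ × ℕ)) := by
    rw [LinearMap.ker_domRestrict, Ipiece_eq]
    ext ⟨f, hf⟩
    simp [hf]
  have h1 := LinearMap.finrank_range_add_finrank_ker ((ΦT T).domRestrict (Sd k i j))
  have hle : Ipiece T.ideal ((i, j) : ℕ × ℕ) ≤ Sd k i j := by
    rw [Ipiece_eq]; exact inf_le_right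
  have h2 : Module.finrank k (Ipiece T.ideal ((i, j) : ℕ × ℕ))
      = Module.finrank k (LinearMap.ker ((ΦT T).domRestrict (Sd k i j))) := by
    rw [hker]
    exact (Submodule.comapSubtypeEquivOfLe hle).finrank_eq.symm
  show Module.finrank k (Sd k i j) - Module.finrank k (Ipiece T.ideal ((i, j) : ℕ × ℕ)) = _
  omega

lemma ker_ΦΨ (T : Staircase k) (i j : ℕ) :
    LinearMap.ker ((ΦT T).domRestrict (Sd k i j))
      = LinearMap.ker ((ΨT T i j).domRestrict (Sd k i j)) := by
  ext f
  obtain ⟨f, hf⟩ := f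
  simp only [LinearMap.mem_ker]
  constructor
  · intro h
    funext p
    have hpD : (p : ℕ × ℕ) ∈ T.D := (Finset.mem_filter.mp p.2).1
    have hmem : Pt T (p : ℕ × ℕ) ∈ T.pts :=
      Finset.mem_image.mpr ⟨(p : ℕ × ℕ), hpD, rfl⟩
    exact congrFun h (⟨Pt T (p : ℕ × ℕ), hmem⟩ : ↥T.pts)
  · intro h
    have hall : ∀ p ∈ T.D, evalPt (Pt T p) f = 0 := by
      refine vanish_extend T i j hf ?_
      intro p hp
      exact congrFun h (⟨p, hp⟩ : ↥(box T i j))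
    funext x
    obtain ⟨p, hpD, hpx⟩ := Finset.mem_image.mp x.2
    have := hall p hpD
    show evalPt (x : PtQ k) f = 0
    rw [← hpx]
    exact this

lemma rank_ΦΨ (T : Staircase k) (i j : ℕ) :
    Module.finrank k (LinearMap.range ((ΦT T).domRestrict (Sd k i j)))
      = Module.finrank k (LinearMap.range ((ΨT T i j).domRestrict (Sd k i j))) := by
  have h1 := LinearMap.finrank_range_add_finrank_ker ((ΦT T).domRestrict (Sd k i j))
  have h2 := LinearMap.finrank_range_add_finrank_ker ((ΨT T i j).domRestrict (Sd k i j))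
  rw [ker_ΦΨ] at h1
  omega

/-! #### The separating forms -/

def Fform (T : Staircase k) (i j u v : ℕ) : S2 k :=
  (∏ t ∈ Finset.range u, linX (T.R t)) * (∏ t ∈ Finset.range v, linY (T.C t)) *
    X (Sum.inl (pivot (T.R u).rep)) ^ (i - u) * X (Sum.inr (pivot (T.C v).rep)) ^ (j - v)

lemma Fform_homog (T : Staircase k) {i j u v : ℕ} (hu : u ≤ i) (hv : v ≤ j) :
    IsWeightedHomogeneous bw (Fform T i j u v) ((i, j) : ℕ × ℕ) := by
  have h := (((prod_linX_homog T.R u).mul (prod_linY_homog T.C v)).mul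
    (Xpow_homog_l (pivot (T.R u).rep) (i - u))).mul (Xpow_homog_r (pivot (T.C v).rep) (j - v))
  have hd : (((((u:ℕ), (0:ℕ)) + ((0:ℕ), (v:ℕ))) + (((i-u:ℕ)), (0:ℕ))) + ((0:ℕ), ((j-v:ℕ))))
      = ((i, j) : ℕ × ℕ) := by
    simp [Prod.ext_iff]
    omega
  rw [hd] at h
  exact h

lemma eval_Fform (T : Staircase k) (i j u v : ℕ) (p : ℕ × ℕ) :
    evalPt (Pt T p) (Fform T i j u v) =
      (∏ t ∈ Finset.range u,
        ((T.R t).rep 1 * (T.R p.1).rep 0 - (T.R t).rep 0 * (T.R p.1).rep 1)) *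
      (∏ t ∈ Finset.range v,
        ((T.C t).rep 1 * (T.C p.2).rep 0 - (T.C t).rep 0 * (T.C p.2).rep 1)) *
      ((T.R p.1).rep (pivot (T.R u).rep)) ^ (i - u) *
      ((T.C p.2).rep (pivot (T.C v).rep)) ^ (j - v) := by
  rw [evalPt_Pt]
  simp [Fform, eval_linX, eval_linY]

lemma eval_Fform_zero_left (T : Staircase k) (i j u v : ℕ) (p : ℕ × ℕ) (h : p.1 < u) :
    evalPt (Pt T p) (Fform T i j u v) = 0 := by
  rw [eval_Fform]
  have : (∏ t ∈ Finset.range u,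
      ((T.R t).rep 1 * (T.R p.1).rep 0 - (T.R t).rep 0 * (T.R p.1).rep 1)) = 0 :=
    Finset.prod_eq_zero (Finset.mem_range.mpr h) (by ring)
  rw [this]; ring

lemma eval_Fform_zero_right (T : Staircase k) (i j u v : ℕ) (p : ℕ × ℕ) (h : p.2 < v) :
    evalPt (Pt T p) (Fform T i j u v) = 0 := by
  rw [eval_Fform]
  have : (∏ t ∈ Finset.range v,
      ((T.C t).rep 1 * (T.C p.2).rep 0 - (T.C t).rep 0 * (T.C p.2).rep 1)) = 0 :=
    Finset.prod_eq_zero (Finset.mem_range.mpr h) (by ring)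
  rw [this]; ring

lemma eval_Fform_diag_ne (T : Staircase k) (i j u v : ℕ) (hD : (u, v) ∈ T.D) :
    evalPt (Pt T (u, v)) (Fform T i j u v) ≠ 0 := by
  rw [eval_Fform]
  have hua : u ≤ T.a := (T.bound _ hD).1
  have hvb : v ≤ T.b := (T.bound _ hD).2
  apply mul_ne_zero
  apply mul_ne_zero
  apply mul_ne_zero
  · rw [Finset.prod_ne_zero_iff]
    intro t ht
    rw [Ne, det_eq_zero_iff]
    intro hRt
    have := T.hR u hua t (by have := Finset.mem_range.mp ht; omega) hRt
    have := Finset.mem_range.mp ht; omega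
  · rw [Finset.prod_ne_zero_iff]
    intro t ht
    rw [Ne, det_eq_zero_iff]
    intro hCt
    have := T.hC v hvb t (by have := Finset.mem_range.mp ht; omega) hCt
    have := Finset.mem_range.mp ht; omega
  · exact pow_ne_zero _ (rep_pivot_ne _)
  · exact pow_ne_zero _ (rep_pivot_ne _)

lemma Fform_indep (T : Staircase k) (i j : ℕ) :
    LinearIndependent k
      (fun p : ↥(box T i j) => (ΨT T i j) (Fform T i j (p : ℕ × ℕ).1 (p : ℕ × ℕ).2)) := by
  rw [Fintype.linearIndependent_iff]
  intro g hg
  suffices H : ∀ n, ∀ p : ↥(box T i j), (p : ℕ × ℕ).1 + (p : ℕ × ℕ).2 = n → g p = 0 by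
    exact fun p => H _ p rfl
  intro n
  induction n using Nat.strong_induction_on with
  | _ n ih =>
    intro p hpn
    have hcoord := congrFun hg p
    rw [Finset.sum_apply] at hcoord
    rw [Finset.sum_eq_single p] at hcoord
    · have hdiag : (ΨT T i j) (Fform T i j (p : ℕ × ℕ).1 (p : ℕ × ℕ).2) p
          = evalPt (Pt T (p : ℕ × ℕ)) (Fform T i j (p : ℕ × ℕ).1 (p : ℕ × ℕ).2) := rfl
      have hpD : ((p : ℕ × ℕ).1, (p : ℕ × ℕ).2) ∈ T.D := by
        have := (Finset.mem_filter.mp p.2).1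
        simpa using this
      have hne := eval_Fform_diag_ne T i j (p : ℕ × ℕ).1 (p : ℕ × ℕ).2 hpD
      rw [Pi.smul_apply, smul_eq_mul, hdiag] at hcoord
      rcases mul_eq_zero.mp hcoord with h | h
      · exact h
      · exact absurd h hne
    · intro q _ hqp
      rw [Pi.smul_apply, smul_eq_mul]
      have hq : (ΨT T i j) (Fform T i j (q : ℕ × ℕ).1 (q : ℕ × ℕ).2) p
          = evalPt (Pt T (p : ℕ × ℕ)) (Fform T i j (q : ℕ × ℕ).1 (q : ℕ × ℕ).2) := rfl
      by_cases hle : (q : ℕ × ℕ).1 ≤ (p : ℕ × ℕ).1 ∧ (q : ℕ × ℕ).2 ≤ (p : ℕ × ℕ).2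
      · have hlt : (q : ℕ × ℕ).1 + (q : ℕ × ℕ).2 < n := by
          have hne : (q : ℕ × ℕ) ≠ (p : ℕ × ℕ) := fun h => hqp (Subtype.ext h)
          rcases Nat.lt_or_ge ((q : ℕ × ℕ).1 + (q : ℕ × ℕ).2) n with h | h
          · exact h
          · exfalso
            have h1 := hle.1
            have h2 := hle.2
            have e1 : (q : ℕ × ℕ).1 = (p : ℕ × ℕ).1 := by omega
            have e2 : (q : ℕ × ℕ).2 = (p : ℕ × ℕ).2 := by omega
            exact hne (Prod.ext e1 e2)
        have hgq := ih _ hlt q rfl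
        rw [hgq]
        ring
      · push_neg at hle
        by_cases h1 : (q : ℕ × ℕ).1 ≤ (p : ℕ × ℕ).1
        · have h2 := hle h1
          rw [hq, eval_Fform_zero_right T i j _ _ _ h2]
          ring
        · push_neg at h1
          rw [hq, eval_Fform_zero_left T i j _ _ _ h1]
          ring
    · intro h
      exact absurd (Finset.mem_univ p) h

lemma rank_Ψ_eq_card (T : Staircase k) (i j : ℕ) :
    Module.finrank k (LinearMap.range ((ΨT T i j).domRestrict (Sd k i j)))
      = (box T i j).card := by
  apply le_antisymm
  · calc Module.finrank k (LinearMap.range ((ΨT T i j).domRestrict (Sd k i j)))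
        ≤ Module.finrank k (↥(box T i j) → k) := Submodule.finrank_le _
      _ = (box T i j).card := by rw [Module.finrank_pi, Fintype.card_coe]
  · set W := LinearMap.range ((ΨT T i j).domRestrict (Sd k i j)) with hW
    have hmem : ∀ p : ↥(box T i j),
        (ΨT T i j) (Fform T i j (p : ℕ × ℕ).1 (p : ℕ × ℕ).2) ∈ W := by
      intro p
      have hp := Finset.mem_filter.mp p.2
      refine ⟨⟨Fform T i j (p : ℕ × ℕ).1 (p : ℕ × ℕ).2, ?_⟩, rfl⟩
      exact Fform_homog T hp.2.1 hp.2.2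
    set w : ↥(box T i j) → ↥W := fun p => ⟨_, hmem p⟩ with hw
    have hindep : LinearIndependent k w := by
      apply LinearIndependent.of_comp W.subtype
      exact Fform_indep T i j
    have := hindep.fintype_card_le_finrank
    rwa [Fintype.card_coe] at this

lemma hilb_eq_card (T : Staircase k) (i j : ℕ) :
    hilb T.ideal i j = (box T i j).card := by
  rw [hilb_eq_rank, rank_ΦΨ, rank_Ψ_eq_card]

end AuxStmt8d

noncomputable section AuxStmt8e

open MvPolynomial

variable {k : Type} [Field k]

def NNf (T : Staircase k) (i j : ℤ) : Finset (ℕ × ℕ) :=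
  T.D.filter fun p => ((p.1 : ℤ) ≤ i ∧ (p.2 : ℤ) ≤ j)

def Rf (T : Staircase k) (i j : ℤ) : Finset (ℕ × ℕ) :=
  T.D.filter fun p => ((p.1 : ℤ) = i ∧ (p.2 : ℤ) ≤ j)

def Ef (T : Staircase k) (i j : ℤ) : Finset (ℕ × ℕ) :=
  T.D.filter fun p => ((p.1 : ℤ) = i ∧ (p.2 : ℤ) = j)

lemma NNf_split (T : Staircase k) (i j : ℤ) :
    (NNf T i j).card = (NNf T (i-1) j).card + (Rf T i j).card := by
  have hu : NNf T i j = NNf T (i-1) j ∪ Rf T i j := by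
    ext p; simp only [NNf, Rf, Finset.mem_union, Finset.mem_filter]
    constructor
    · rintro ⟨hD, h1, h2⟩
      rcases Int.lt_or_le (p.1 : ℤ) i with h | h
      · exact Or.inl ⟨hD, by omega, h2⟩
      · exact Or.inr ⟨hD, by omega, h2⟩
    · rintro (⟨hD, h1, h2⟩ | ⟨hD, h1, h2⟩)
      · exact ⟨hD, by omega, h2⟩
      · exact ⟨hD, by omega, h2⟩
  have hd : Disjoint (NNf T (i-1) j) (Rf T i j) := by
    rw [Finset.disjoint_left]
    intro p hp hq
    simp only [NNf, Rf, Finset.mem_filter] at hp hq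
    omega
  rw [hu, Finset.card_union_of_disjoint hd]

lemma Rf_split (T : Staircase k) (i j : ℤ) :
    (Rf T i j).card = (Rf T i (j-1)).card + (Ef T i j).card := by
  have hu : Rf T i j = Rf T i (j-1) ∪ Ef T i j := by
    ext p; simp only [Rf, Ef, Finset.mem_union, Finset.mem_filter]
    constructor
    · rintro ⟨hD, h1, h2⟩
      rcases Int.lt_or_le (p.2 : ℤ) j with h | h
      · exact Or.inl ⟨hD, h1, by omega⟩
      · exact Or.inr ⟨hD, h1, by omega⟩
    · rintro (⟨hD, h1, h2⟩ | ⟨hD, h1, h2⟩)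
      · exact ⟨hD, h1, by omega⟩
      · exact ⟨hD, h1, by omega⟩
  have hd : Disjoint (Rf T i (j-1)) (Ef T i j) := by
    rw [Finset.disjoint_left]
    intro p hp hq
    simp only [Rf, Ef, Finset.mem_filter] at hp hq
    omega
  rw [hu, Finset.card_union_of_disjoint hd]

lemma HM_eq_NNf (T : Staircase k) (i j : ℤ) :
    HM T.ideal i j = ((NNf T i j).card : ℤ) := by
  unfold HM
  by_cases h : 0 ≤ i ∧ 0 ≤ j
  · rw [if_pos h, hilb_eq_card]
    have hbe : box T i.toNat j.toNat = NNf T i j := by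
      ext p
      simp only [box, NNf, Finset.mem_filter]
      constructor
      · rintro ⟨hD, h1, h2⟩
        exact ⟨hD, by omega, by omega⟩
      · rintro ⟨hD, h1, h2⟩
        exact ⟨hD, by omega, by omega⟩
    rw [hbe]
  · rw [if_neg h]
    have : NNf T i j = ∅ := by
      rw [NNf, Finset.filter_eq_empty_iff]
      intro p _
      push_neg at h ⊢
      intro h1
      omega
    rw [this]
    simp

lemma Ef_card (T : Staircase k) (i j : ℕ) :
    (Ef T (i : ℤ) (j : ℤ)).card = (if (i, j) ∈ T.D then 1 else 0) := by
  have : Ef T (i : ℤ) (j : ℤ) = T.D.filter fun p => p = (i, j) := by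
    ext p
    simp only [Ef, Finset.mem_filter, Prod.ext_iff]
    constructor
    · rintro ⟨hD, h1, h2⟩
      exact ⟨hD, by omega, by omega⟩
    · rintro ⟨hD, h1, h2⟩
      exact ⟨hD, by omega, by omega⟩
  rw [this, Finset.filter_eq']
  split <;> simp

lemma ΔH_indicator (T : Staircase k) (i j : ℕ) :
    ΔH T.ideal (i : ℤ) (j : ℤ) = (if (i, j) ∈ T.D then 1 else 0 : ℤ) := by
  unfold ΔH
  rw [HM_eq_NNf, HM_eq_NNf, HM_eq_NNf, HM_eq_NNf]
  have s1 := NNf_split T (i : ℤ) (j : ℤ)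
  have s2 := NNf_split T (i : ℤ) ((j : ℤ) - 1)
  have s3 := Rf_split T (i : ℤ) (j : ℤ)
  have e := Ef_card T i j
  by_cases hmem : (i, j) ∈ T.D
  · rw [if_pos hmem] at e ⊢
    omega
  · rw [if_neg hmem] at e ⊢
    omega

end AuxStmt8e
/-- for a reduced ACM scheme X arranged in a staircase grid,
c_{ij} = 1 iff P_{ij} ∈ X. -/
theorem stmt8 (k : Type) [Field k] [IsAlgClosed k] (T : Staircase k) :
    ∀ i j : ℕ, ΔH T.ideal (i : ℤ) (j : ℤ) = 1 ↔ (i, j) ∈ T.D := by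
  intro i j
  have key := ΔH_indicator T i j
  constructor
  · intro h
    by_contra hmem
    rw [key, if_neg hmem] at h
    exact absurd h (by norm_num)
  · intro h
    rw [key, if_pos h]
end
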